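/- arXiv:1310.6348 — 5 statements merged into one kernel-verified Lean document; each statement's English description precedes it below -/
import Mathlib

section
/- For all integers n ≥ 0, m ≥ 0 and 0 < q < 1, the q-shifted factorial satisfies |(q^{-m}; q)_n · q^{nm}| ≤ q^{n(n-1)/2}. -/
/-- For integers n ≥ 0, m ≥ 0 and 0 < q < 1,
`|(q^{-m}; q)_n · q^{nm}| ≤ q^{n(n-1)/2}`. -/
theorem qPoch_neg_pow_bound (q : ℝ) (hq0 : 0 < q) (hq1 : q < 1) (n m : ℕ) :
    |(∏ k ∈ Finset.range n, (1 - q ^ (-(m : ℤ)) * q ^ k)) * q ^ (n * m)| ≤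
      q ^ (n * (n - 1) / 2) := by
  have hq0' : q ≠ 0 := ne_of_gt hq0
  rcases lt_or_ge m n with hmn | hmn
  · have hz : (∏ k ∈ Finset.range n, (1 - q ^ (-(m : ℤ)) * q ^ k)) = 0 := by
      apply Finset.prod_eq_zero (Finset.mem_range.mpr hmn)
      rw [zpow_neg, zpow_natCast, inv_mul_cancel₀ (pow_ne_zero _ hq0'), sub_self]
    rw [hz, zero_mul, abs_zero]
    positivity
  · have key : (∏ k ∈ Finset.range n, (1 - q ^ (-(m : ℤ)) * q ^ k)) * q ^ (n * m)
        = ∏ k ∈ Finset.range n, (q ^ m - q ^ k) := by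
      rw [mul_comm n m, pow_mul,
        show (q ^ m) ^ n = ∏ _k ∈ Finset.range n, q ^ m by
          rw [Finset.prod_const, Finset.card_range],
        ← Finset.prod_mul_distrib]
      refine Finset.prod_congr rfl fun k _ => ?_
      rw [zpow_neg, zpow_natCast]
      field_simp
    rw [key, Finset.abs_prod]
    calc ∏ k ∈ Finset.range n, |q ^ m - q ^ k|
        ≤ ∏ k ∈ Finset.range n, q ^ k := by
          refine Finset.prod_le_prod (fun k _ => abs_nonneg _) fun k hk => ?_
          have hk' : k ≤ m := le_trans (Nat.le_of_lt_succ
            (Nat.lt_succ_of_lt (Finset.mem_range.mp hk))) hmn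
          have h1 : q ^ m ≤ q ^ k := pow_le_pow_of_le_one hq0.le hq1.le hk'
          rw [abs_of_nonpos (by linarith)]
          have : (0:ℝ) ≤ q ^ m := by positivity
          linarith
      _ = q ^ (n * (n - 1) / 2) := by
          rw [Finset.prod_pow_eq_pow_sum, Finset.sum_range_id]
end

section
/- For every nonnegative integer n, every complex a and z, and 0 < q < 1, one has (q^{1-n};q)_∞ · ₁φ₁(a; q^{1-n}; q, z) = (-z)^n q^{n(n-1)/2} (a;q)_n (q^{1+n};q)_∞ · ₁φ₁(a q^n; q^{1+n}; q, q^n z), where both sides are interpreted via the absolutely convergent series Σ_k (a;q)_k (q^{1-n+k};q)_∞ / (q;q)_k · (-1)^k z^k q^{k(k-1)/2} on the left. -/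
open scoped BigOperators

/-- Finite q-shifted factorial `(a;q)_k`. -/
noncomputable def qPoch (a q : ℂ) (k : ℕ) : ℂ := ∏ j ∈ Finset.range k, (1 - a * q ^ j)

/-- Infinite q-shifted factorial `(a;q)_∞`. -/
noncomputable def qPochInf (a q : ℂ) : ℂ := ∏' j : ℕ, (1 - a * q ^ j)

/-- The basic hypergeometric series `₁φ₁(a; b; q, z)`. -/
noncomputable def phi11 (a b q z : ℂ) : ℂ :=
  ∑' k : ℕ, qPoch a q k / (qPoch b q k * qPoch q q k) *
    (-1) ^ k * q ^ (k * (k - 1) / 2) * z ^ k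

/-- `(q^{1-n};q)_∞ ₁φ₁(a; q^{1-n}; q, z)`, interpreted via the regularized series
`Σ_k (a;q)_k (q^{1-n+k};q)_∞ / (q;q)_k (-1)^k z^k q^{k(k-1)/2}`. -/
noncomputable def regPhi11 (a : ℂ) (n : ℤ) (q : ℝ) (z : ℂ) : ℂ :=
  ∑' k : ℕ, qPoch a q k * qPochInf ((q : ℂ) ^ (1 - n + (k : ℤ))) q / qPoch q q k *
    (-1) ^ k * z ^ k * (q : ℂ) ^ (k * (k - 1) / 2)

section helpers

lemma one_sub_qpow_ne {q : ℝ} (hq0 : 0 < q) (hq1 : q < 1) (t : ℕ) (ht : 1 ≤ t) : (1:ℂ) - (q:ℂ)^t ≠ 0 := by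
  have h : (0:ℝ) < 1 - q^t := by
    have := pow_lt_one₀ hq0.le hq1 (by omega : t ≠ 0)
    linarith
  intro hc
  have h2 : ((1 - q^t : ℝ) : ℂ) = 0 := by push_cast; linear_combination hc
  rw [Complex.ofReal_eq_zero] at h2
  linarith

lemma mult_qpow {q : ℝ} (hq0 : 0 < q) (hq1 : q < 1) (s : ℕ) (hs : 1 ≤ s) :
    Multipliable (fun j : ℕ => (1:ℂ) - (q:ℂ)^s * (q:ℂ)^j) := by
  have hne : ∀ j : ℕ, (1:ℂ) - (q:ℂ)^s * (q:ℂ)^j ≠ 0 := by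
    intro j
    have := one_sub_qpow_ne hq0 hq1 (s+j) (by omega)
    rwa [pow_add] at this
  have hsum : Summable (fun j : ℕ => Complex.log ((1:ℂ) - (q:ℂ)^s * (q:ℂ)^j)) := by
    apply Summable.of_norm
    have hg : Summable (fun j : ℕ => (q^s/(1-q)) * q^j) :=
      (summable_geometric_of_lt_one hq0.le hq1).mul_left _
    refine Summable.of_nonneg_of_le (fun j => norm_nonneg _) ?_ hg
    intro j
    set x : ℝ := q^(s+j) with hx
    have hx0 : 0 < x := pow_pos hq0 _
    have hx1 : x < 1 := pow_lt_one₀ hq0.le hq1 (by omega)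
    have hxq : x ≤ q := by
      have := pow_le_pow_of_le_one hq0.le hq1.le (by omega : 1 ≤ s + j)
      simpa [hx] using this
    have hcast : (1:ℂ) - (q:ℂ)^s * (q:ℂ)^j = ((1 - x : ℝ) : ℂ) := by
      push_cast [hx, pow_add]; ring
    rw [hcast, ← Complex.ofReal_log (by linarith : (0:ℝ) ≤ 1 - x),
      Complex.norm_real, Real.norm_eq_abs]
    have hlog : Real.log (1 - x) ≤ 0 := Real.log_nonpos (by linarith) (by linarith)
    rw [abs_of_nonpos hlog]
    have h2 : -Real.log (1-x) = Real.log (1-x)⁻¹ := by rw [Real.log_inv]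
    have h3 : Real.log (1-x)⁻¹ ≤ (1-x)⁻¹ - 1 :=
      Real.log_le_sub_one_of_pos (inv_pos.mpr (by linarith))
    have hne1 : (1:ℝ) - x ≠ 0 := by linarith
    have h4 : (1-x)⁻¹ - 1 = x / (1-x) := by field_simp; ring
    have h5 : x / (1-x) ≤ x / (1-q) := by gcongr
    have h6 : x / (1-q) = q^s/(1-q) * q^j := by rw [hx, pow_add]; ring
    linarith
  exact Complex.multipliable_of_summable_log hsum

lemma qPoch_add (a qq : ℂ) (n m : ℕ) :
    qPoch a qq (n + m) = qPoch a qq n * qPoch (a * qq^n) qq m := by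
  rw [qPoch, qPoch, qPoch, Finset.prod_range_add]
  congr 1
  refine Finset.prod_congr rfl fun j _ => ?_
  rw [pow_add]; ring

lemma qPochInf_split {q : ℝ} (hq0 : 0 < q) (hq1 : q < 1) (s t : ℕ) (hs : 1 ≤ s) :
    qPochInf ((q:ℂ)^s) q = qPoch ((q:ℂ)^s) q t * qPochInf ((q:ℂ)^(s+t)) q := by
  have hm : Multipliable (fun j : ℕ => (1:ℂ) - (q:ℂ)^s * (q:ℂ)^(j + t)) := by
    have := mult_qpow hq0 hq1 (s+t) (by omega)
    refine this.congr fun j => ?_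
    rw [pow_add, pow_add]; ring
  have := Multipliable.prod_mul_tprod_nat_mul' (M := ℂ) (f := fun j : ℕ => (1:ℂ) - (q:ℂ)^s * (q:ℂ)^j)
    (k := t) hm
  have h2 : (∏' j : ℕ, ((1:ℂ) - (q:ℂ)^(s+t) * (q:ℂ)^j))
      = ∏' j : ℕ, ((1:ℂ) - (q:ℂ)^s * (q:ℂ)^(j+t)) :=
    tprod_congr fun j => by rw [pow_add, pow_add]; ring
  rw [qPochInf, qPochInf, qPoch, h2]
  exact this.symm

lemma tprod_eq_zero_of_eq_zero {f : ℕ → ℂ} (i0 : ℕ) (h : f i0 = 0) : ∏' j, f j = 0 := by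
  have hp : HasProd f 0 := by
    rw [HasProd]
    refine (tendsto_const_nhds : Filter.Tendsto (fun _ : Finset ℕ => (0:ℂ)) _ _).congr' ?_
    filter_upwards [Filter.eventually_ge_atTop ({i0} : Finset ℕ)] with s hs
    exact (Finset.prod_eq_zero (hs (Finset.mem_singleton_self i0)) h).symm
  exact hp.tprod_eq

lemma tri_add (n m : ℕ) :
    (m + n) * ((m + n) - 1) / 2 = n * (n - 1) / 2 + n * m + m * (m - 1) / 2 := by
  have hdvd : ∀ k : ℕ, 2 ∣ k * (k - 1) := by
    intro k
    rcases Nat.even_or_odd k with h | h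
    · exact Dvd.dvd.mul_right h.two_dvd _
    · exact Dvd.dvd.mul_left (Nat.Odd.sub_odd h odd_one).two_dvd _
  have key : (m + n) * ((m + n) - 1) = n * (n - 1) + 2 * (n * m) + m * (m - 1) := by
    rcases n with _ | a <;> rcases m with _ | b <;> simp [Nat.succ_sub_one] <;> ring_nf
  have h1 := hdvd (m + n); have h2 := hdvd n; have h3 := hdvd m
  omega

end helpers

/-- for n ≥ 0,
`(q^{1-n};q)_∞ ₁φ₁(a;q^{1-n};q,z)
  = (-z)^n q^{n(n-1)/2} (a;q)_n (q^{1+n};q)_∞ ₁φ₁(aq^n; q^{1+n}; q, q^n z)`. -/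
theorem regPhi11_shift (q : ℝ) (hq0 : 0 < q) (hq1 : q < 1) (n : ℕ) (a z : ℂ) :
    regPhi11 a (n : ℤ) q z =
      (-z) ^ n * (q : ℂ) ^ (n * (n - 1) / 2) * qPoch a q n *
        qPochInf ((q : ℂ) ^ (1 + n)) q *
        phi11 (a * (q : ℂ) ^ n) ((q : ℂ) ^ (1 + n)) q ((q : ℂ) ^ n * z) := by
  have hqC0 : (q:ℂ) ≠ 0 := by exact_mod_cast hq0.ne'
  set F : ℕ → ℂ := fun k => qPoch a q k * qPochInf ((q : ℂ) ^ (1 - (n:ℤ) + (k : ℤ))) q / qPoch q q k *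
    (-1) ^ k * z ^ k * (q : ℂ) ^ (k * (k - 1) / 2) with hF
  set C : ℂ := (-z) ^ n * (q : ℂ) ^ (n * (n - 1) / 2) * qPoch a q n *
        qPochInf ((q : ℂ) ^ (1 + n)) q with hC
  set G : ℕ → ℂ := fun m => qPoch (a * (q:ℂ)^n) q m /
      (qPoch ((q:ℂ)^(1+n)) q m * qPoch q q m) *
    (-1) ^ m * (q:ℂ) ^ (m * (m - 1) / 2) * ((q:ℂ)^n * z) ^ m with hG
  -- vanishing for k < n
  have hzero : ∀ k, k < n → F k = 0 := by
    intro k hk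
    have hinf : qPochInf ((q : ℂ) ^ (1 - (n:ℤ) + (k : ℤ))) q = 0 := by
      rw [qPochInf]
      apply tprod_eq_zero_of_eq_zero (n - 1 - k)
      have he : (q:ℂ) ^ (1 - (n:ℤ) + (k : ℤ)) * (q:ℂ) ^ (n - 1 - k : ℕ) = 1 := by
        rw [← zpow_natCast (q:ℂ) (n - 1 - k), ← zpow_add₀ hqC0]
        have : (1 - (n:ℤ) + (k : ℤ)) + ((n - 1 - k : ℕ) : ℤ) = 0 := by
          push_cast [Nat.cast_sub (by omega : k ≤ n - 1), Nat.cast_sub (by omega : 1 ≤ n)]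
          omega
        rw [this, zpow_zero]
      rw [he]; ring
    simp [hF, hinf]
  -- qPoch nonvanishing
  have hPne : ∀ s k : ℕ, 1 ≤ s → qPoch ((q:ℂ)^s) q k ≠ 0 := by
    intro s k hs
    rw [qPoch]
    apply Finset.prod_ne_zero_iff.mpr
    intro j _
    have := one_sub_qpow_ne hq0 hq1 (s + j) (by omega)
    rwa [pow_add] at this
  have hDne : ∀ k : ℕ, qPoch q q k ≠ 0 := by
    intro k
    have := hPne 1 k le_rfl
    rwa [pow_one] at this
  -- shift of tsum
  have hshift : ∑' k, F k = ∑' m, F (m + n) := by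
    refine (Function.Injective.tsum_eq (add_left_injective n) ?_).symm
    intro x hx
    rcases lt_or_ge x n with h | h
    · exact absurd (hzero x h) hx
    · exact ⟨x - n, by simpa using Nat.sub_add_cancel h⟩
  -- key pochhammer identity
  have key2 : ∀ m : ℕ, qPochInf ((q:ℂ)^(1+m)) q * qPoch q q m * qPoch ((q:ℂ)^(1+n)) q m
      = qPochInf ((q:ℂ)^(1+n)) q * qPoch q q (m + n) := by
    intro m
    have s1 : qPochInf ((q:ℂ)^(1+m)) q
        = qPoch ((q:ℂ)^(1+m)) q n * qPochInf ((q:ℂ)^(1+m+n)) q :=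
      qPochInf_split hq0 hq1 (1+m) n (by omega)
    have s2 : qPochInf ((q:ℂ)^(1+n)) q
        = qPoch ((q:ℂ)^(1+n)) q m * qPochInf ((q:ℂ)^(1+m+n)) q := by
      have := qPochInf_split hq0 hq1 (1+n) m (by omega)
      rwa [show 1+n+m = 1+m+n by omega] at this
    have s3 : qPoch q q (m + n) = qPoch q q m * qPoch ((q:ℂ)^(1+m)) q n := by
      have := qPoch_add (q:ℂ) (q:ℂ) m n
      rwa [show (q:ℂ) * (q:ℂ)^m = (q:ℂ)^(1+m) by rw [pow_add, pow_one]] at this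
    rw [s1, s2, s3]; ring
  -- termwise identity
  have hterm : ∀ m : ℕ, F (m + n) = C * G m := by
    intro m
    have e1 : (q:ℂ) ^ (1 - (n:ℤ) + ((m + n : ℕ) : ℤ)) = (q:ℂ)^(1+m) := by
      have : (1 - (n:ℤ) + ((m + n : ℕ) : ℤ)) = ((1 + m : ℕ) : ℤ) := by push_cast; omega
      rw [this, zpow_natCast]
    have e2 : qPoch a q (m + n) = qPoch a q n * qPoch (a * (q:ℂ)^n) q m := by
      rw [add_comm m n, qPoch_add]
    have e3 : (q:ℂ) ^ ((m + n) * ((m + n) - 1) / 2)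
        = (q:ℂ) ^ (n * (n - 1) / 2) * (q:ℂ) ^ (n * m) * (q:ℂ) ^ (m * (m - 1) / 2) := by
      rw [tri_add, pow_add, pow_add]
    have e4 : qPochInf ((q:ℂ)^(1+m)) q / qPoch q q (m + n)
        = qPochInf ((q:ℂ)^(1+n)) q / (qPoch ((q:ℂ)^(1+n)) q m * qPoch q q m) := by
      rw [div_eq_div_iff (hDne (m+n)) (mul_ne_zero (hPne (1+n) m (by omega)) (hDne m))]
      linear_combination key2 m
    rw [hF, hC, hG]
    simp only
    rw [e1, e2, e3]
    rw [mul_div_assoc, e4]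
    ring
  calc regPhi11 a (n : ℤ) q z = ∑' k, F k := rfl
    _ = ∑' m, F (m + n) := hshift
    _ = ∑' m, C * G m := by exact tsum_congr hterm
    _ = C * ∑' m, G m := tsum_mul_left
    _ = _ := by rw [hC, hG]; rfl
end

section
/- For 0 < q < 1, a complex number a, complex z, and integer n ≥ 0, the function f(n,a,z) = (q^{1-n};q)_∞ · ₁φ₁(a; q^{1-n}; q, z) satisfies the bound |f(n,a,z)| ≤ |z|^n q^{n(n-1)/2} (-q;q)_∞ (-|a|;q)_∞ (-|z|;q)_∞. -/
open scoped BigOperators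

/-- Infinite q-shifted factorial `(a;q)_∞` (real). -/
noncomputable def rqPochInf (a q : ℝ) : ℝ := ∏' j : ℕ, (1 - a * q ^ j)

lemma tri_succ (k : ℕ) : (k+1)*k/2 = k*(k-1)/2 + k := by
  cases k with
  | zero => rfl
  | succ j =>
    obtain ⟨r, hr⟩ := Nat.even_mul_succ_self j
    have e1 : (j+1+1)*(j+1) = r + r + 2*(j+1) := by
      rw [show (j+1+1)*(j+1) = j*(j+1) + 2*(j+1) by ring, hr]
    have e2 : (j+1)*((j+1)-1) = r + r := by simpa [Nat.mul_comm] using hr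
    omega

lemma tri (n m : ℕ) : (n+m)*((n+m)-1)/2 = n*(n-1)/2 + m*(m-1)/2 + n*m := by
  induction m with
  | zero => simp
  | succ m ih =>
    have h4 : n + (m+1) = (n+m) + 1 := by omega
    rw [h4, Nat.add_sub_cancel, tri_succ (n+m), ih, Nat.add_sub_cancel, tri_succ m,
      Nat.mul_succ]
    omega

lemma summ_geo {q : ℝ} (hq0 : 0 < q) (hq1 : q < 1) (c : ℝ) :
    Summable (fun j : ℕ => c * q ^ j) :=
  (summable_geometric_of_lt_one hq0.le hq1).mul_left c

lemma mult_one_add {q : ℝ} (hq0 : 0 < q) (hq1 : q < 1) {c : ℝ} (hc : 0 ≤ c) :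
    Multipliable (fun j : ℕ => 1 + c * q ^ j) := by
  have hpos : ∀ j : ℕ, (0:ℝ) < 1 + c * q ^ j := fun j => by
    nlinarith [mul_nonneg hc (pow_nonneg hq0.le j)]
  have hlog : Summable (fun j : ℕ => Real.log (1 + c * q ^ j)) := by
    refine Summable.of_nonneg_of_le
      (fun j => Real.log_nonneg (by nlinarith [mul_nonneg hc (pow_nonneg hq0.le j)]))
      (fun j => ?_) (summ_geo hq0 hq1 c)
    have := Real.log_le_sub_one_of_pos (hpos j)
    linarith
  have h := hlog.hasSum.rexp
  have hfun : (Real.exp ∘ fun j : ℕ => Real.log (1 + c * q ^ j)) = fun j : ℕ => 1 + c * q ^ j :=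
    funext fun j => Real.exp_log (hpos j)
  rw [hfun] at h
  exact ⟨_, h⟩

lemma mult_one_sub {q : ℝ} (hq0 : 0 < q) (hq1 : q < 1) (m : ℕ) :
    Multipliable (fun j : ℕ => 1 - q ^ (m+1+j)) := by
  have hple : ∀ j : ℕ, q ^ (m+1+j) ≤ q ^ (1:ℕ) :=
    fun j => pow_le_pow_of_le_one hq0.le hq1.le (by omega)
  have hpos : ∀ j : ℕ, (0:ℝ) < 1 - q ^ (m+1+j) := fun j => by
    have := pow_lt_one₀ hq0.le hq1 (n := m+1+j) (by omega); linarith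
  have hlog : Summable (fun j : ℕ => -Real.log (1 - q ^ (m+1+j))) := by
    refine Summable.of_nonneg_of_le (fun j => ?_) (fun j => ?_)
      (summ_geo hq0 hq1 (q^(m+1) / (1-q)))
    · have : Real.log (1 - q ^ (m+1+j)) ≤ 0 :=
        Real.log_nonpos (hpos j).le (by nlinarith [pow_pos hq0 (m+1+j)])
      linarith
    · have h1 : -Real.log (1 - q^(m+1+j)) = Real.log (1 - q^(m+1+j))⁻¹ := by
        rw [Real.log_inv]
      have h2 := Real.log_le_sub_one_of_pos (x := (1 - q^(m+1+j))⁻¹) (inv_pos.2 (hpos j))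
      have h3 : (1 - q^(m+1+j))⁻¹ - 1 = q^(m+1+j) / (1 - q^(m+1+j)) := by
        rw [eq_div_iff (hpos j).ne', sub_mul, inv_mul_cancel₀ (hpos j).ne']; ring
      have h4 : q^(m+1+j) / (1 - q^(m+1+j)) ≤ q^(m+1+j) / (1 - q) := by
        apply div_le_div_of_nonneg_left (pow_nonneg hq0.le _) (by linarith) ?_
        have := hple j
        simp only [pow_one] at this
        linarith
      have h5 : q^(m+1+j) / (1-q) = q^(m+1)/(1-q) * q^j := by
        rw [pow_add, pow_add]; ring
      rw [h1]
      calc Real.log (1 - q^(m+1+j))⁻¹ ≤ (1 - q^(m+1+j))⁻¹ - 1 := h2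
        _ = q^(m+1+j) / (1 - q^(m+1+j)) := h3
        _ ≤ q^(m+1+j) / (1-q) := h4
        _ = q^(m+1)/(1-q) * q^j := h5
  have hlog' : Summable (fun j : ℕ => Real.log (1 - q ^ (m+1+j))) := by
    simpa using hlog.neg
  have h := hlog'.hasSum.rexp
  have hfun : (Real.exp ∘ fun j : ℕ => Real.log (1 - q ^ (m+1+j)))
      = fun j : ℕ => 1 - q ^ (m+1+j) := funext fun j => Real.exp_log (hpos j)
  rw [hfun] at h
  exact ⟨_, h⟩
noncomputable def qq (q : ℝ) (k : ℕ) : ℝ := ∏ j ∈ Finset.range k, (1 - q^(j+1))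
noncomputable def PP (q : ℝ) (m : ℕ) : ℝ := ∏' j : ℕ, (1 - q^(m+1+j))
noncomputable def cc (q : ℝ) (m : ℕ) : ℝ := q^(m*(m-1)/2) / qq q m

lemma qq_pos {q : ℝ} (hq0 : 0 < q) (hq1 : q < 1) (k : ℕ) : 0 < qq q k := by
  refine Finset.prod_pos fun j _ => ?_
  have := pow_lt_one₀ hq0.le hq1 (n := j+1) (by omega); linarith

lemma qq_succ (q : ℝ) (k : ℕ) : qq q (k+1) = qq q k * (1 - q^(k+1)) :=
  Finset.prod_range_succ _ _

lemma cc_zero (q : ℝ) : cc q 0 = 1 := by simp [cc, qq]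

lemma cc_nonneg {q : ℝ} (hq0 : 0 < q) (hq1 : q < 1) (m : ℕ) : 0 ≤ cc q m :=
  div_nonneg (pow_nonneg hq0.le _) (qq_pos hq0 hq1 m).le

lemma cc_rec {q : ℝ} (hq0 : 0 < q) (hq1 : q < 1) (m : ℕ) :
    cc q (m+1) = cc q (m+1) * q^(m+1) + cc q m * q^m := by
  have hrec : cc q (m+1) * (1 - q^(m+1)) = cc q m * q^m := by
    unfold cc
    rw [qq_succ, Nat.add_sub_cancel, tri_succ m, pow_add]
    have h1 := (qq_pos hq0 hq1 m).ne'
    have h2 : (1 : ℝ) - q^(m+1) ≠ 0 := by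
      have := pow_lt_one₀ hq0.le hq1 (n := m+1) (by omega); intro h; linarith
    field_simp
  nlinarith [hrec]

lemma PP_le_one {q : ℝ} (hq0 : 0 < q) (hq1 : q < 1) (m : ℕ) : PP q m ≤ 1 := by
  refine le_of_tendsto (mult_one_sub hq0 hq1 m).hasProd (Filter.Eventually.of_forall fun s => ?_)
  refine Finset.prod_le_one (fun j _ => ?_) (fun j _ => ?_)
  · have := pow_lt_one₀ hq0.le hq1 (n := m+1+j) (by omega); linarith
  · nlinarith [pow_pos hq0 (m+1+j)]

lemma PP_nonneg {q : ℝ} (hq0 : 0 < q) (hq1 : q < 1) (m : ℕ) : 0 ≤ PP q m := by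
  refine ge_of_tendsto (mult_one_sub hq0 hq1 m).hasProd (Filter.Eventually.of_forall fun s => ?_)
  refine Finset.prod_nonneg fun j _ => ?_
  have := pow_lt_one₀ hq0.le hq1 (n := m+1+j) (by omega); linarith

lemma PP_split {q : ℝ} (hq0 : 0 < q) (hq1 : q < 1) (m n : ℕ) :
    PP q m = (∏ j ∈ Finset.range n, (1 - q^(m+1+j))) * PP q (m+n) := by
  have hm : Multipliable (fun j : ℕ => 1 - q^(m+1+(j+n))) :=
    (mult_one_sub hq0 hq1 (m+n)).congr fun j => by rw [show m+n+1+j = m+1+(j+n) by omega]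
  have h := Multipliable.prod_mul_tprod_nat_mul' (f := fun j : ℕ => 1 - q^(m+1+j)) (k := n) hm
  rw [PP, ← h, PP]
  congr 1
  exact tprod_congr fun j => by
    show (1 : ℝ) - q^(m+1+(j+n)) = 1 - q^(m+n+1+j)
    rw [show m+1+(j+n) = m+n+1+j by omega]

lemma PP_le_prod {q : ℝ} (hq0 : 0 < q) (hq1 : q < 1) (m n : ℕ) :
    PP q m ≤ ∏ j ∈ Finset.range n, (1 - q^(m+1+j)) := by
  rw [PP_split hq0 hq1 m n]
  have hD : 0 ≤ ∏ j ∈ Finset.range n, (1 - q^(m+1+j)) := by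
    refine Finset.prod_nonneg fun j _ => ?_
    have := pow_lt_one₀ hq0.le hq1 (n := m+1+j) (by omega); linarith
  nlinarith [PP_le_one hq0 hq1 (m+n), PP_nonneg hq0 hq1 (m+n)]

lemma qq_split (q : ℝ) (n m : ℕ) :
    qq q (n+m) = qq q m * ∏ j ∈ Finset.range n, (1 - q^(m+1+j)) := by
  rw [show n+m = m+n by omega, qq, Finset.prod_range_add]
  congr 1
  exact Finset.prod_congr rfl fun j _ => by rw [show m+j+1 = m+1+j by omega]

lemma ratio_le {q : ℝ} (hq0 : 0 < q) (hq1 : q < 1) (n m : ℕ) :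
    PP q m / qq q (n+m) ≤ 1 / qq q m := by
  set D := ∏ j ∈ Finset.range n, (1 - q^(m+1+j)) with hD
  have hDpos : 0 < D := by
    refine Finset.prod_pos fun j _ => ?_
    have := pow_lt_one₀ hq0.le hq1 (n := m+1+j) (by omega); linarith
  have hqm := qq_pos hq0 hq1 m
  rw [qq_split q n m, ← hD]
  rw [div_le_div_iff₀ (by positivity) hqm]
  have hle := PP_le_prod hq0 hq1 m n
  rw [← hD] at hle
  nlinarith [hqm.le]
lemma euler_identity {q : ℝ} (hq0 : 0 < q) (hq1 : q < 1) (x : ℝ) (N : ℕ) :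
    (1+x) * (∑ m ∈ Finset.range (N+1), cc q m * (q*x)^m)
      = (∑ m ∈ Finset.range (N+1), cc q m * x^m) + cc q N * q^N * x^(N+1) := by
  induction N with
  | zero => simp [cc_zero]
  | succ N ih =>
    rw [Finset.sum_range_succ, Finset.sum_range_succ (f := fun m => cc q m * x^m)]
    have hrec := cc_rec hq0 hq1 N
    have hmp : (q*x)^(N+1) = q^(N+1) * x^(N+1) := mul_pow q x (N+1)
    rw [mul_add, ih, hmp]
    linear_combination (-(x^(N+1))) * hrec
lemma prod_le_tprod_real {f : ℕ → ℝ} (hf1 : ∀ j, 1 ≤ f j) (hm : Multipliable f) (k : ℕ) :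
    ∏ j ∈ Finset.range k, f j ≤ ∏' j, f j := by
  refine ge_of_tendsto hm.hasProd ?_
  filter_upwards [Filter.eventually_ge_atTop (Finset.range k)] with s hs
  have hsd := Finset.prod_sdiff (f := f) hs
  have h1 : (1:ℝ) ≤ ∏ j ∈ s \ Finset.range k, f j := by
    calc (1:ℝ) = ∏ _j ∈ s \ Finset.range k, (1:ℝ) := by simp
      _ ≤ ∏ j ∈ s \ Finset.range k, f j :=
        Finset.prod_le_prod (fun i _ => zero_le_one) (fun i _ => hf1 i)
  have h2 : (0:ℝ) ≤ ∏ j ∈ Finset.range k, f j :=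
    Finset.prod_nonneg fun j _ => (zero_le_one.trans (hf1 j))
  nlinarith

lemma one_le_tprod_real {f : ℕ → ℝ} (hf1 : ∀ j, 1 ≤ f j) (hm : Multipliable f) :
    (1:ℝ) ≤ ∏' j, f j := by
  simpa using prod_le_tprod_real hf1 hm 0

noncomputable def GG (q x : ℝ) (N : ℕ) : ℝ := ∑ m ∈ Finset.range (N+1), cc q m * x^m

lemma GG_nonneg {q : ℝ} (hq0 : 0 < q) (hq1 : q < 1) {x : ℝ} (hx : 0 ≤ x) (N : ℕ) :
    0 ≤ GG q x N :=
  Finset.sum_nonneg fun m _ => mul_nonneg (cc_nonneg hq0 hq1 m) (pow_nonneg hx m)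

lemma GG_step {q : ℝ} (hq0 : 0 < q) (hq1 : q < 1) {x : ℝ} (hx : 0 ≤ x) (N : ℕ) :
    GG q x N ≤ (1+x) * GG q (q*x) N := by
  have h := euler_identity hq0 hq1 x N
  have hterm : 0 ≤ cc q N * q^N * x^(N+1) := by
    have := cc_nonneg hq0 hq1 N; positivity
  unfold GG
  rw [h]; linarith

lemma GG_iter {q : ℝ} (hq0 : 0 < q) (hq1 : q < 1) {x : ℝ} (hx : 0 ≤ x) (N k : ℕ) :
    GG q x N ≤ (∏ j ∈ Finset.range k, (1 + x*q^j)) * GG q (q^k*x) N := by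
  induction k with
  | zero => simp
  | succ k ih =>
    have hx' : 0 ≤ q^k * x := mul_nonneg (pow_nonneg hq0.le k) hx
    have hP : 0 ≤ ∏ j ∈ Finset.range k, (1 + x*q^j) :=
      Finset.prod_nonneg fun j _ => by nlinarith [mul_nonneg hx (pow_nonneg hq0.le j)]
    have h2 := GG_step hq0 hq1 hx' N
    calc GG q x N ≤ (∏ j ∈ Finset.range k, (1 + x*q^j)) * GG q (q^k*x) N := ih
      _ ≤ (∏ j ∈ Finset.range k, (1 + x*q^j)) * ((1 + q^k*x) * GG q (q*(q^k*x)) N) :=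
          mul_le_mul_of_nonneg_left h2 hP
      _ = (∏ j ∈ Finset.range (k+1), (1 + x*q^j)) * GG q (q^(k+1)*x) N := by
          rw [Finset.prod_range_succ, show q*(q^k*x) = q^(k+1)*x by ring,
            show (1:ℝ) + q^k*x = 1 + x*q^k by ring]
          ring

lemma GG_small {q : ℝ} (hq0 : 0 < q) (hq1 : q < 1) {x : ℝ} (hx : 0 ≤ x) (N k : ℕ) :
    GG q (q^k*x) N ≤ 1 + q^k * GG q x N := by
  unfold GG
  rw [Finset.sum_range_succ' (f := fun m => cc q m * (q^k*x)^m),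
    Finset.sum_range_succ' (f := fun m => cc q m * x^m)]
  simp only [pow_zero, mul_one, cc_zero]
  have hsum : ∑ m ∈ Finset.range N, cc q (m+1) * (q^k*x)^(m+1)
      ≤ q^k * ∑ m ∈ Finset.range N, cc q (m+1) * x^(m+1) := by
    rw [Finset.mul_sum]
    refine Finset.sum_le_sum fun m _ => ?_
    have h1 : (q^k*x)^(m+1) = (q^k)^(m+1) * x^(m+1) := mul_pow _ _ _
    have h2 : (q^k)^(m+1) ≤ (q^k)^1 :=
      pow_le_pow_of_le_one (pow_nonneg hq0.le k) (pow_le_one₀ hq0.le hq1.le) (by omega)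
    rw [h1, pow_one] at *
    have := cc_nonneg hq0 hq1 (m+1)
    have hxp : (0:ℝ) ≤ x^(m+1) := pow_nonneg hx _
    nlinarith [mul_le_mul_of_nonneg_left h2 (mul_nonneg this hxp)]
  nlinarith [pow_nonneg hq0.le k]

lemma GG_le_tprod {q : ℝ} (hq0 : 0 < q) (hq1 : q < 1) {x : ℝ} (hx : 0 ≤ x) (N : ℕ) :
    GG q x N ≤ ∏' j : ℕ, (1 + x*q^j) := by
  set Z := ∏' j : ℕ, (1 + x*q^j) with hZ
  have hmult' : Multipliable (fun j : ℕ => 1 + x*q^j) := mult_one_add hq0 hq1 hx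
  have hone : ∀ j : ℕ, (1:ℝ) ≤ 1 + x*q^j :=
    fun j => by nlinarith [mul_nonneg hx (pow_nonneg hq0.le j)]
  have hZ1 : (1:ℝ) ≤ Z := one_le_tprod_real hone hmult'
  have hstep : ∀ k : ℕ, GG q x N ≤ Z * (1 + q^k * GG q x N) := by
    intro k
    have h1 := GG_iter hq0 hq1 hx N k
    have h2 : (∏ j ∈ Finset.range k, (1 + x*q^j)) ≤ Z :=
      prod_le_tprod_real hone hmult' k
    have h3 := GG_small hq0 hq1 hx N k
    have h4 := GG_nonneg hq0 hq1 (mul_nonneg (pow_nonneg hq0.le k) hx) N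
    calc GG q x N ≤ (∏ j ∈ Finset.range k, (1 + x*q^j)) * GG q (q^k*x) N := h1
      _ ≤ Z * (1 + q^k * GG q x N) :=
          mul_le_mul h2 h3 h4 (by linarith)
  have htend : Filter.Tendsto (fun k : ℕ => Z * (1 + q^k * GG q x N)) Filter.atTop
      (nhds (Z * (1 + 0 * GG q x N))) := by
    refine Filter.Tendsto.const_mul _ (Filter.Tendsto.const_add _ ?_)
    exact (tendsto_pow_atTop_nhds_zero_of_lt_one hq0.le hq1).mul_const _
  have := ge_of_tendsto htend (Filter.Eventually.of_forall hstep)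
  simpa using this

lemma euler_partial {q : ℝ} (hq0 : 0 < q) (hq1 : q < 1) {x : ℝ} (hx : 0 ≤ x) (K : ℕ) :
    ∑ m ∈ Finset.range K, cc q m * x^m ≤ ∏' j : ℕ, (1 + x*q^j) := by
  have h1 : ∑ m ∈ Finset.range K, cc q m * x^m ≤ GG q x K := by
    unfold GG
    refine Finset.sum_le_sum_of_subset_of_nonneg (Finset.range_subset_range.2 (by omega))
      fun m _ _ => mul_nonneg (cc_nonneg hq0 hq1 m) (pow_nonneg hx m)
  exact h1.trans (GG_le_tprod hq0 hq1 hx K)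
lemma hasProd_eq_zero {f : ℕ → ℂ} {t : ℕ} (h : f t = 0) : HasProd f 0 := by
  have hev : (fun s : Finset ℕ => ∏ j ∈ s, f j) =ᶠ[Filter.atTop] (fun _ => 0) := by
    filter_upwards [Filter.eventually_ge_atTop ({t} : Finset ℕ)] with s hs
    exact Finset.prod_eq_zero (hs (Finset.mem_singleton_self t)) h
  exact Filter.Tendsto.congr' hev.symm tendsto_const_nhds

lemma qPochInf_zero {q : ℝ} (hq0 : 0 < q) {n k : ℕ} (hk : k < n) :
    qPochInf ((q:ℂ) ^ (1 - (n:ℤ) + (k:ℤ))) q = 0 := by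
  have hqne : (q:ℂ) ≠ 0 := by
    simpa using Complex.ofReal_ne_zero.2 hq0.ne'
  have hfactor : 1 - (q:ℂ) ^ (1 - (n:ℤ) + (k:ℤ)) * (q:ℂ) ^ (n-1-k : ℕ) = 0 := by
    rw [show ((q:ℂ) ^ (n-1-k : ℕ) = (q:ℂ) ^ ((n-1-k : ℕ) : ℤ)) from (zpow_natCast _ _).symm,
      ← zpow_add₀ hqne, show (1 - (n:ℤ) + (k:ℤ) + ((n-1-k : ℕ) : ℤ)) = 0 by omega]
    simp
  exact (hasProd_eq_zero hfactor).tprod_eq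

lemma qPoch_q_cast {q : ℝ} (k : ℕ) : qPoch (q:ℂ) (q:ℂ) k = ((qq q k : ℝ) : ℂ) := by
  rw [qPoch, qq]
  push_cast
  exact Finset.prod_congr rfl fun j _ => by ring

lemma qPochInf_cast {q : ℝ} (hq0 : 0 < q) (hq1 : q < 1) (m n : ℕ) :
    qPochInf ((q:ℂ) ^ (1 - (n:ℤ) + ((n+m : ℕ) : ℤ))) q = ((PP q m : ℝ) : ℂ) := by
  have he : (1 - (n:ℤ) + ((n+m : ℕ) : ℤ)) = ((m+1 : ℕ) : ℤ) := by omega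
  rw [he, zpow_natCast]
  have h2 := ((mult_one_sub hq0 hq1 m).hasProd).map Complex.ofRealHom Complex.continuous_ofReal
  have hfun : (⇑Complex.ofRealHom ∘ fun j : ℕ => 1 - q^(m+1+j))
      = fun j : ℕ => 1 - (q:ℂ)^(m+1) * (q:ℂ)^j := by
    funext j
    simp only [Function.comp_apply, Complex.ofRealHom_eq_coe]
    push_cast
    ring
  rw [hfun] at h2
  exact h2.tprod_eq

lemma rq_eq (q c : ℝ) : rqPochInf (-c) q = ∏' j : ℕ, (1 + c*q^j) := by
  rw [rqPochInf]
  exact tprod_congr fun j => by ring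

lemma abs_qPoch_le {q : ℝ} (hq0 : 0 < q) (hq1 : q < 1) (a : ℂ) (k : ℕ) :
    ‖qPoch a (q:ℂ) k‖ ≤ rqPochInf (-(‖a‖)) q := by
  rw [qPoch, norm_prod]
  have hone : ∀ j : ℕ, (1:ℝ) ≤ 1 + ‖a‖ * q^j := fun j => by
    nlinarith [mul_nonneg (norm_nonneg a) (pow_nonneg hq0.le j)]
  have step1 : ∏ j ∈ Finset.range k, ‖1 - a*(q:ℂ)^j‖
      ≤ ∏ j ∈ Finset.range k, (1 + ‖a‖ * q^j) := by
    refine Finset.prod_le_prod (fun j _ => norm_nonneg _) (fun j _ => ?_)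
    have h1 := norm_sub_le (1:ℂ) (a*(q:ℂ)^j)
    have h2 : ‖a*(q:ℂ)^j‖ = ‖a‖ * q^j := by
      rw [norm_mul, norm_pow, Complex.norm_real, Real.norm_eq_abs, abs_of_nonneg hq0.le]
    simp only [norm_one] at h1
    linarith [h1, h2.le, h2.ge]
  rw [rq_eq]
  exact step1.trans (prod_le_tprod_real hone (mult_one_add hq0 hq1 (norm_nonneg a)) k)

lemma one_le_rq {q : ℝ} (hq0 : 0 < q) (hq1 : q < 1) {c : ℝ} (hc : 0 ≤ c) :
    (1:ℝ) ≤ rqPochInf (-c) q := by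
  rw [rq_eq]
  exact one_le_tprod_real
    (fun j => by nlinarith [mul_nonneg hc (pow_nonneg hq0.le j)])
    (mult_one_add hq0 hq1 hc)

lemma term_abs_le {q : ℝ} (hq0 : 0 < q) (hq1 : q < 1) (n m : ℕ) (a z : ℂ) :
    ‖qPoch a (q:ℂ) (n+m) * qPochInf ((q:ℂ) ^ (1 - (n:ℤ) + ((n+m : ℕ) : ℤ))) q /
        qPoch (q:ℂ) (q:ℂ) (n+m) * (-1)^(n+m) * z^(n+m) * (q:ℂ)^((n+m)*((n+m)-1)/2)‖
      ≤ (‖z‖ ^ n * q ^ (n*(n-1)/2) * rqPochInf (-(‖a‖)) q)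
        * (cc q m * ‖z‖ ^ m) := by
  set x := ‖z‖ with hxdef
  set A := rqPochInf (-(‖a‖)) q with hAdef
  have hx : 0 ≤ x := norm_nonneg z
  have hA1 : (1:ℝ) ≤ A := one_le_rq hq0 hq1 (norm_nonneg a)
  have hA0 : (0:ℝ) ≤ A := zero_le_one.trans hA1
  have hPP0 := PP_nonneg hq0 hq1 m
  have hqq := qq_pos hq0 hq1 (n+m)
  have hqqm := qq_pos hq0 hq1 m
  have e1 : ‖qPoch a (q:ℂ) (n+m) * qPochInf ((q:ℂ) ^ (1 - (n:ℤ) + ((n+m : ℕ) : ℤ))) q /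
        qPoch (q:ℂ) (q:ℂ) (n+m) * (-1)^(n+m) * z^(n+m) * (q:ℂ)^((n+m)*((n+m)-1)/2)‖
      = (‖qPoch a (q:ℂ) (n+m)‖ * (PP q m / qq q (n+m)))
          * (x^(n+m) * q^((n+m)*((n+m)-1)/2)) := by
    rw [qPochInf_cast hq0 hq1 m n, qPoch_q_cast]
    simp only [norm_mul, norm_div, norm_pow, norm_neg, norm_one, one_pow,
      Complex.norm_real, Real.norm_eq_abs, abs_of_nonneg hPP0, abs_of_nonneg hqq.le, abs_of_nonneg hq0.le,
      ← hxdef]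
    ring
  rw [e1]
  have h1 : ‖qPoch a (q:ℂ) (n+m)‖ ≤ A := abs_qPoch_le hq0 hq1 a (n+m)
  have h2 : PP q m / qq q (n+m) ≤ 1 / qq q m := ratio_le hq0 hq1 n m
  have hd0 : 0 ≤ PP q m / qq q (n+m) := div_nonneg hPP0 hqq.le
  have key : (‖qPoch a (q:ℂ) (n+m)‖ * (PP q m / qq q (n+m)))
      * (x^(n+m) * q^((n+m)*((n+m)-1)/2))
      ≤ (A * (1 / qq q m)) * (x^(n+m) * q^((n+m)*((n+m)-1)/2)) := by
    apply mul_le_mul_of_nonneg_right ?_ (by positivity)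
    exact mul_le_mul h1 h2 hd0 hA0
  refine key.trans ?_
  have e2 : (A * (1 / qq q m)) * (x^(n+m) * q^((n+m)*((n+m)-1)/2))
      = ((x^n * q^(n*(n-1)/2) * A) * (cc q m * x^m)) * q^(n*m) := by
    rw [tri n m, pow_add, pow_add, pow_add, cc]
    field_simp
  rw [e2]
  have h3 : q^(n*m) ≤ 1 := pow_le_one₀ hq0.le hq1.le
  have h4 : 0 ≤ (x^n * q^(n*(n-1)/2) * A) * (cc q m * x^m) := by
    have := cc_nonneg hq0 hq1 m
    positivity
  nlinarith

/-- `|f(n,a,z)| ≤ |z|^n q^{n(n-1)/2} (-q;q)_∞ (-|a|;q)_∞ (-|z|;q)_∞`. -/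
theorem regPhi11_bound (q : ℝ) (hq0 : 0 < q) (hq1 : q < 1) (n : ℕ) (a z : ℂ) :
    ‖regPhi11 a (n : ℤ) q z‖ ≤
      ‖z‖ ^ n * q ^ (n * (n - 1) / 2) *
        (rqPochInf (-q) q * rqPochInf (-‖a‖) q *
          rqPochInf (-‖z‖) q) := by
  set x := ‖z‖ with hxdef
  have hx : 0 ≤ x := norm_nonneg z
  set A := rqPochInf (-(‖a‖)) q with hAdef
  set Q := rqPochInf (-q) q with hQdef
  set Z := ∏' j : ℕ, (1 + x*q^j) with hZdef
  have hZeq : rqPochInf (-x) q = Z := rq_eq q x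
  have hA1 : (1:ℝ) ≤ A := one_le_rq hq0 hq1 (norm_nonneg a)
  have hQ1 : (1:ℝ) ≤ Q := one_le_rq hq0 hq1 hq0.le
  have hZ1 : (1:ℝ) ≤ Z := by rw [← hZeq]; exact one_le_rq hq0 hq1 hx
  set F : ℕ → ℂ := fun k => qPoch a q k * qPochInf ((q : ℂ) ^ (1 - (n:ℤ) + (k : ℤ))) q /
      qPoch q q k * (-1) ^ k * z ^ k * (q : ℂ) ^ (k * (k - 1) / 2) with hFdef
  have hreg : regPhi11 a (n : ℤ) q z = ∑' k, F k := rfl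
  set B := x^n * q^(n*(n-1)/2) * A with hBdef
  have hB0 : 0 ≤ B := by positivity
  have hF0 : ∀ k, k < n → F k = 0 := by
    intro k hk
    have h := qPochInf_zero hq0 (n := n) (k := k) hk
    simp only [hFdef, h, mul_zero, zero_div, zero_mul]
  have hFm : ∀ m : ℕ, ‖F (n+m)‖ ≤ B * (cc q m * x^m) := by
    intro m
    exact term_abs_le hq0 hq1 n m a z
  have hpartial : ∀ K : ℕ, ∑ k ∈ Finset.range K, ‖F k‖ ≤ B * Z := by
    intro K
    have hsub : ∑ k ∈ Finset.range K, ‖F k‖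
        ≤ ∑ k ∈ Finset.range (n+K), ‖F k‖ :=
      Finset.sum_le_sum_of_subset_of_nonneg (Finset.range_subset_range.2 (by omega))
        (fun k _ _ => norm_nonneg _)
    refine hsub.trans ?_
    rw [Finset.sum_range_add]
    have hz : ∑ k ∈ Finset.range n, ‖F k‖ = 0 :=
      Finset.sum_eq_zero fun k hk => by
        rw [hF0 k (Finset.mem_range.1 hk), norm_zero]
    rw [hz, zero_add]
    calc ∑ m ∈ Finset.range K, ‖F (n+m)‖
        ≤ ∑ m ∈ Finset.range K, B * (cc q m * x^m) :=
          Finset.sum_le_sum fun m _ => hFm m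
      _ = B * ∑ m ∈ Finset.range K, cc q m * x^m := by rw [Finset.mul_sum]
      _ ≤ B * Z := mul_le_mul_of_nonneg_left (euler_partial hq0 hq1 hx K) hB0
  have hsummable : Summable (fun k => ‖F k‖) := by
    refine summable_of_sum_range_le (c := B * Z) (fun k => norm_nonneg _) (fun K => ?_)
    exact hpartial K
  have habs : ‖∑' k, F k‖ ≤ ∑' k, ‖F k‖ := by
    refine (norm_tsum_le_tsum_norm hsummable).trans ?_
    exact le_refl _
  have htsum : ∑' k, ‖F k‖ ≤ B * Z :=
    Real.tsum_le_of_sum_range_le (fun k => norm_nonneg _) hpartial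
  rw [hreg, hZeq]
  refine (habs.trans htsum).trans ?_
  have hAZ : 0 ≤ A * Z := mul_nonneg (zero_le_one.trans hA1) (zero_le_one.trans hZ1)
  have hxq : 0 ≤ x^n * q^(n*(n-1)/2) := by positivity
  calc B * Z = (x^n * q^(n*(n-1)/2)) * (A * Z) := by rw [hBdef]; ring
    _ ≤ (x^n * q^(n*(n-1)/2)) * (Q * (A * Z)) :=
        mul_le_mul_of_nonneg_left (le_mul_of_one_le_left hAZ hQ1) hxq
    _ = x^n * q^(n*(n-1)/2) * (Q * A * Z) := by ring
end

section
/- For 0 < q < 1, α > -1 and β > -1, the little q-Jacobi polynomials satisfy the pointwise limit lim_{n→∞} p_n(q^n x; q^α, q^β; q) = j_α(x; q) for every complex x, where the convergence is uniform on compact subsets of ℂ. -/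
open scoped BigOperators

/-- Little q-Jacobi polynomial `p_n(x; q^α, q^β; q)`. -/
noncomputable def littleQJacobi (n : ℕ) (α β q : ℝ) (x : ℂ) : ℂ :=
  ∑ k ∈ Finset.range (n + 1),
    qPoch ((q : ℂ) ^ (-(n : ℤ))) q k * qPoch ((q : ℂ) ^ ((α + β + n + 1 : ℝ) : ℂ)) q k /
      (qPoch ((q : ℂ) ^ ((α + 1 : ℝ) : ℂ)) q k * qPoch q q k) * x ^ k

/-- Normalized little q-Bessel function `j_α(x;q) = ₁φ₁(0; q^{α+1}; q, x)`. -/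
noncomputable def littleQBessel (α q : ℝ) (x : ℂ) : ℂ :=
  ∑' k : ℕ, (-1) ^ k * (q : ℂ) ^ (k * (k - 1) / 2) * x ^ k /
    (qPoch ((q : ℂ) ^ ((α + 1 : ℝ) : ℂ)) q k * qPoch q q k)


open Finset Filter

/-- real q-Pochhammer -/
noncomputable def rP (a q : ℝ) (k : ℕ) : ℝ := ∏ j ∈ Finset.range k, (1 - a * q ^ j)

lemma qPoch_ofReal (a q : ℝ) (k : ℕ) : qPoch (a : ℂ) (q : ℂ) k = ((rP a q k : ℝ) : ℂ) := by
  simp [qPoch, rP]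

noncomputable def bc (α q : ℝ) (k : ℕ) : ℂ :=
  ((-1) ^ k * (q : ℂ) ^ (k * (k - 1) / 2)) / ((rP (q ^ (α+1)) q k * rP q q k : ℝ) : ℂ)

noncomputable def P1 (q : ℝ) (n k : ℕ) : ℝ := ∏ j ∈ Finset.range k, (1 - q ^ (n - j))

noncomputable def P2 (q c : ℝ) (n k : ℕ) : ℝ := ∏ j ∈ Finset.range k, (1 - c * q ^ n * q ^ j)

noncomputable def cp (α β q : ℝ) (n k : ℕ) : ℂ :=
  if k ≤ n then bc α q k * ((P1 q n k * P2 q (q ^ (α+β+1)) n k : ℝ) : ℂ) else 0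

lemma rP_lower {a q : ℝ} (ha0 : 0 ≤ a) (ha1 : a < 1) (hq0 : 0 ≤ q) (hq1 : q ≤ 1) (k : ℕ) :
    (1 - a) ^ k ≤ rP a q k := by
  have h : (1 - a) ^ k = ∏ _j ∈ Finset.range k, (1 - a) := by simp
  rw [h, rP]
  refine Finset.prod_le_prod (fun j _ => ?_) (fun j _ => ?_)
  · nlinarith [pow_le_one₀ hq0 hq1 (n := j), pow_nonneg hq0 j]
  · nlinarith [pow_le_one₀ hq0 hq1 (n := j), pow_nonneg hq0 j]

lemma rP_pos {a q : ℝ} (ha0 : 0 ≤ a) (ha1 : a < 1) (hq0 : 0 ≤ q) (hq1 : q ≤ 1) (k : ℕ) :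
    0 < rP a q k :=
  lt_of_lt_of_le (pow_pos (by linarith) k) (rP_lower ha0 ha1 hq0 hq1 k)

lemma key_prod (q : ℝ) (hq0 : 0 < q) {n k : ℕ} (hk : k ≤ n) :
    qPoch ((q:ℂ) ^ (-(n:ℤ))) (q:ℂ) k * ((q:ℂ) ^ n) ^ k
      = (-1) ^ k * (q:ℂ) ^ (k * (k - 1) / 2) * ((P1 q n k : ℝ) : ℂ) := by
  have hq : (q:ℂ) ≠ 0 := by exact_mod_cast hq0.ne'
  have h1 : ((q:ℂ) ^ n) ^ k = ∏ _j ∈ Finset.range k, (q:ℂ) ^ n := by simp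
  rw [qPoch, h1, ← Finset.prod_mul_distrib]
  have h2 : ∀ j ∈ Finset.range k,
      (1 - (q:ℂ) ^ (-(n:ℤ)) * (q:ℂ) ^ j) * (q:ℂ) ^ n
        = ((-1) * (q:ℂ) ^ j) * (1 - (q:ℂ) ^ (n - j)) := by
    intro j hj
    have hjn : j ≤ n := le_of_lt (lt_of_lt_of_le (Finset.mem_range.mp hj) hk)
    have e1 : (q:ℂ) ^ (-(n:ℤ)) * (q:ℂ) ^ n = 1 := by
      rw [zpow_neg, zpow_natCast]; exact inv_mul_cancel₀ (pow_ne_zero _ hq)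
    have e2 : (q:ℂ) ^ j * (q:ℂ) ^ (n - j) = (q:ℂ) ^ n := by
      rw [← pow_add, Nat.add_sub_cancel' hjn]
    linear_combination (-(q:ℂ)^j) * e1 - e2
  rw [Finset.prod_congr rfl h2, Finset.prod_mul_distrib, Finset.prod_mul_distrib]
  congr 1
  · congr 1
    · simp
    · rw [Finset.prod_pow_eq_pow_sum, Finset.sum_range_id]
  · push_cast [P1]
    rfl

lemma den_eq (q α : ℝ) (hq0 : 0 < q) (k : ℕ) :
    qPoch ((q:ℂ) ^ ((α + 1 : ℝ) : ℂ)) (q:ℂ) k * qPoch (q:ℂ) (q:ℂ) k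
      = ((rP (q ^ (α+1)) q k * rP q q k : ℝ) : ℂ) := by
  rw [← Complex.ofReal_cpow hq0.le, qPoch_ofReal, qPoch_ofReal]
  push_cast
  ring

lemma den_pos (q α : ℝ) (hq0 : 0 < q) (hq1 : q < 1) (hα : -1 < α) (k : ℕ) :
    0 < rP (q ^ (α+1)) q k * rP q q k := by
  have h1 : 0 < rP (q ^ (α+1)) q k :=
    rP_pos (le_of_lt (Real.rpow_pos_of_pos hq0 _))
      (Real.rpow_lt_one hq0.le hq1 (by linarith)) hq0.le hq1.le k
  have h2 : 0 < rP q q k := rP_pos hq0.le hq1 hq0.le hq1.le k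
  exact mul_pos h1 h2

lemma num2_eq (q α β : ℝ) (hq0 : 0 < q) (n k : ℕ) :
    qPoch ((q:ℂ) ^ ((α + β + n + 1 : ℝ) : ℂ)) (q:ℂ) k
      = ((P2 q (q ^ (α+β+1)) n k : ℝ) : ℂ) := by
  rw [← Complex.ofReal_cpow hq0.le, qPoch_ofReal]
  have h : (q:ℝ) ^ (α + β + (n:ℝ) + 1) = q ^ (α+β+1) * q ^ n := by
    rw [← Real.rpow_natCast q n, ← Real.rpow_add hq0]
    ring_nf
  rw [h]
  rfl

lemma jacobi_eq (q α β : ℝ) (hq0 : 0 < q) (hq1 : q < 1) (hα : -1 < α) (n : ℕ) (x : ℂ) :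
    littleQJacobi n α β q ((q:ℂ) ^ n * x) = ∑ k ∈ Finset.range (n+1), cp α β q n k * x ^ k := by
  unfold littleQJacobi
  refine Finset.sum_congr rfl fun k hk => ?_
  have hk' : k ≤ n := Nat.lt_succ_iff.mp (Finset.mem_range.mp hk)
  rw [cp, if_pos hk', mul_pow, den_eq q α hq0, num2_eq q α β hq0]
  have hden : ((rP (q ^ (α+1)) q k * rP q q k : ℝ) : ℂ) ≠ 0 := by
    exact_mod_cast (den_pos q α hq0 hq1 hα k).ne'
  have hkey := key_prod q hq0 hk'
  set N1 := qPoch ((q:ℂ) ^ (-(n:ℤ))) (q:ℂ) k with hN1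
  rw [bc]
  push_cast
  field_simp
  linear_combination ((P2 q (q ^ (α+β+1)) n k : ℝ) : ℂ) * x ^ k *
    ((((rP (q ^ (α+1)) q k : ℝ) : ℂ))⁻¹ * (((rP q q k : ℝ) : ℂ))⁻¹) * hkey

lemma bessel_eq (q α : ℝ) (hq0 : 0 < q) (x : ℂ) :
    littleQBessel α q x = ∑' k, bc α q k * x ^ k := by
  unfold littleQBessel
  refine tsum_congr fun k => ?_
  rw [den_eq q α hq0, bc]
  ring

lemma P1_nonneg (q : ℝ) (hq0 : 0 ≤ q) (hq1 : q ≤ 1) (n k : ℕ) : 0 ≤ P1 q n k :=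
  Finset.prod_nonneg fun j _ => by nlinarith [pow_le_one₀ hq0 hq1 (n := n - j), pow_nonneg hq0 (n - j)]

lemma P1_le_one (q : ℝ) (hq0 : 0 ≤ q) (hq1 : q ≤ 1) (n k : ℕ) : P1 q n k ≤ 1 :=
  Finset.prod_le_one (fun j _ => by nlinarith [pow_le_one₀ hq0 hq1 (n := n - j), pow_nonneg hq0 (n - j)])
    (fun j _ => by nlinarith [pow_le_one₀ hq0 hq1 (n := n - j), pow_nonneg hq0 (n - j)])

lemma abs_P2_le (q c : ℝ) (hq0 : 0 ≤ q) (hq1 : q ≤ 1) (hc : 0 ≤ c) (n k : ℕ) :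
    |P2 q c n k| ≤ (1 + c) ^ k := by
  rw [P2, Finset.abs_prod]
  have h : ∀ j ∈ Finset.range k, |1 - c * q ^ n * q ^ j| ≤ 1 + c := by
    intro j _
    have h1 : 0 ≤ c * q ^ n * q ^ j := by positivity
    have hqq : q ^ n * q ^ j ≤ 1 :=
      mul_le_one₀ (pow_le_one₀ hq0 hq1) (pow_nonneg hq0 j) (pow_le_one₀ hq0 hq1)
    have h2 : c * q ^ n * q ^ j ≤ c := by
      calc c * q ^ n * q ^ j = c * (q ^ n * q ^ j) := by ring
        _ ≤ c * 1 := mul_le_mul_of_nonneg_left hqq hc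
        _ = c := mul_one c
    rw [abs_le]
    constructor <;> nlinarith
  calc ∏ j ∈ Finset.range k, |1 - c * q ^ n * q ^ j| ≤ ∏ _j ∈ Finset.range k, (1 + c) :=
        Finset.prod_le_prod (fun j _ => abs_nonneg _) h
    _ = (1 + c) ^ k := by simp

lemma norm_bc_le (q α : ℝ) (hq0 : 0 < q) (hq1 : q < 1) (hα : -1 < α) (k : ℕ) :
    ‖bc α q k‖ ≤ q ^ (k * (k - 1) / 2) / ((1 - q ^ (α+1)) * (1 - q)) ^ k := by
  have hqa1 : q ^ (α+1) < 1 := Real.rpow_lt_one hq0.le hq1 (by linarith)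
  have hqa0 : 0 < q ^ (α+1) := Real.rpow_pos_of_pos hq0 _
  have hd := den_pos q α hq0 hq1 hα k
  have hlow : ((1 - q ^ (α+1)) * (1 - q)) ^ k ≤ rP (q ^ (α+1)) q k * rP q q k := by
    rw [mul_pow]
    exact mul_le_mul (rP_lower hqa0.le hqa1 hq0.le hq1.le k)
      (rP_lower hq0.le hq1 hq0.le hq1.le k) (pow_nonneg (by linarith) k)
      (le_of_lt (rP_pos hqa0.le hqa1 hq0.le hq1.le k))
  have hnorm : ‖bc α q k‖ = q ^ (k * (k - 1) / 2) / (rP (q ^ (α+1)) q k * rP q q k) := by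
    rw [bc, norm_div, norm_mul, norm_pow, norm_pow, norm_neg, norm_one, one_pow, one_mul,
      Complex.norm_real, Complex.norm_real, Real.norm_of_nonneg hq0.le, Real.norm_of_nonneg hd.le]
  rw [hnorm]
  gcongr

noncomputable def Mb (q α β : ℝ) (k : ℕ) : ℝ :=
  2 * q ^ (k * (k - 1) / 2) * ((1 + q ^ (α+β+1)) / ((1 - q ^ (α+1)) * (1 - q))) ^ k

lemma norm_sub_le_Mb (q α β : ℝ) (hq0 : 0 < q) (hq1 : q < 1) (hα : -1 < α) (hβ : -1 < β)
    (n k : ℕ) : ‖cp α β q n k - bc α q k‖ ≤ Mb q α β k := by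
  have hs0 : 0 ≤ q ^ (α+β+1) := (Real.rpow_pos_of_pos hq0 _).le
  have hqa1 : q ^ (α+1) < 1 := Real.rpow_lt_one hq0.le hq1 (by linarith)
  have hqa0 : 0 < q ^ (α+1) := Real.rpow_pos_of_pos hq0 _
  have he : 0 < (1 - q ^ (α+1)) * (1 - q) := mul_pos (by linarith) (by linarith)
  have hBk := norm_bc_le q α hq0 hq1 hα k
  have h1s : (1:ℝ) ≤ (1 + q ^ (α+β+1)) ^ k := one_le_pow₀ (by linarith)
  have hB0 : 0 ≤ q ^ (k * (k - 1) / 2) / ((1 - q ^ (α+1)) * (1 - q)) ^ k := by positivity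
  have hMb : Mb q α β k =
      2 * (q ^ (k * (k - 1) / 2) / ((1 - q ^ (α+1)) * (1 - q)) ^ k) * (1 + q ^ (α+β+1)) ^ k := by
    rw [Mb, div_pow]; ring
  rw [cp]
  split_ifs with hkn
  · have hfact : bc α q k * ((P1 q n k * P2 q (q ^ (α+β+1)) n k : ℝ) : ℂ) - bc α q k
        = bc α q k * (((P1 q n k * P2 q (q ^ (α+β+1)) n k - 1 : ℝ)) : ℂ) := by
      push_cast; ring
    rw [hfact, norm_mul, Complex.norm_real]
    have habs : |P1 q n k * P2 q (q ^ (α+β+1)) n k| ≤ (1 + q ^ (α+β+1)) ^ k := by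
      rw [abs_mul, abs_of_nonneg (P1_nonneg q hq0.le hq1.le n k)]
      calc P1 q n k * |P2 q (q ^ (α+β+1)) n k|
          ≤ 1 * (1 + q ^ (α+β+1)) ^ k :=
            mul_le_mul (P1_le_one q hq0.le hq1.le n k)
              (abs_P2_le q _ hq0.le hq1.le hs0 n k) (abs_nonneg _) zero_le_one
        _ = (1 + q ^ (α+β+1)) ^ k := one_mul _
    have habs' := abs_le.mp habs
    have hx : |P1 q n k * P2 q (q ^ (α+β+1)) n k - 1| ≤ 2 * (1 + q ^ (α+β+1)) ^ k :=
      abs_le.mpr ⟨by nlinarith, by nlinarith⟩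
    calc ‖bc α q k‖ * |P1 q n k * P2 q (q ^ (α+β+1)) n k - 1|
        ≤ (q ^ (k * (k - 1) / 2) / ((1 - q ^ (α+1)) * (1 - q)) ^ k)
            * (2 * (1 + q ^ (α+β+1)) ^ k) :=
          mul_le_mul hBk hx (abs_nonneg _) hB0
      _ = Mb q α β k := by rw [hMb]; ring
  · rw [zero_sub, norm_neg]
    calc ‖bc α q k‖ ≤ q ^ (k * (k - 1) / 2) / ((1 - q ^ (α+1)) * (1 - q)) ^ k := hBk
      _ ≤ Mb q α β k := by rw [hMb]; nlinarith

lemma summable_Mb_mul (q α β : ℝ) (hq0 : 0 < q) (hq1 : q < 1) (hα : -1 < α)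
    (R : ℝ) (hR : 0 ≤ R) : Summable (fun k => Mb q α β k * R ^ k) := by
  have hqa1 : q ^ (α+1) < 1 := Real.rpow_lt_one hq0.le hq1 (by linarith)
  set A := (1 + q ^ (α+β+1)) / ((1 - q ^ (α+1)) * (1 - q)) with hA
  have hA0 : 0 ≤ A := by
    apply div_nonneg
    · have := (Real.rpow_pos_of_pos hq0 (α+β+1)).le; linarith
    · nlinarith
  apply summable_of_ratio_norm_eventually_le (r := 1/2) (by norm_num)
  have hto : Filter.Tendsto (fun k : ℕ => q ^ k * (A * R)) Filter.atTop (nhds 0) := by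
    simpa using (tendsto_pow_atTop_nhds_zero_of_lt_one hq0.le hq1).mul_const (A * R)
  have hev : ∀ᶠ k in Filter.atTop, q ^ k * (A * R) < 1/2 :=
    hto.eventually (gt_mem_nhds (by norm_num))
  filter_upwards [hev] with k hk
  have hexp : (k+1) * ((k+1) - 1) / 2 = k * (k - 1) / 2 + k := by
    rw [← Finset.sum_range_id, ← Finset.sum_range_id, Finset.sum_range_succ]
  have hMb' : Mb q α β (k+1) * R ^ (k+1) = (Mb q α β k * R ^ k) * (q ^ k * (A * R)) := by
    rw [Mb, Mb, hexp, pow_add, pow_succ, pow_succ]; ring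
  rw [hMb', Real.norm_eq_abs, Real.norm_eq_abs, abs_mul]
  have h1 : 0 ≤ q ^ k * (A * R) := by positivity
  calc |Mb q α β k * R ^ k| * |q ^ k * (A * R)|
      ≤ |Mb q α β k * R ^ k| * (1/2) := by
        apply mul_le_mul_of_nonneg_left _ (abs_nonneg _)
        rw [abs_of_nonneg h1]; linarith
    _ = 1/2 * ‖Mb q α β k * R ^ k‖ := by rw [Real.norm_eq_abs]; ring

lemma cp_tendsto (q α β : ℝ) (hq0 : 0 < q) (hq1 : q < 1) (k : ℕ) :
    Filter.Tendsto (fun n => cp α β q n k) Filter.atTop (nhds (bc α q k)) := by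
  have hp1 : Filter.Tendsto (fun n => P1 q n k) Filter.atTop (nhds 1) := by
    have hf : ∀ j ∈ Finset.range k, Filter.Tendsto (fun n : ℕ => 1 - q ^ (n - j))
        Filter.atTop (nhds 1) := by
      intro j _
      have h0 : Filter.Tendsto (fun n : ℕ => q ^ (n - j)) Filter.atTop (nhds 0) :=
        (tendsto_pow_atTop_nhds_zero_of_lt_one hq0.le hq1).comp (tendsto_sub_atTop_nat j)
      simpa using tendsto_const_nhds.sub h0
    have := tendsto_finset_prod (Finset.range k) hf
    simpa [P1] using this
  have hp2 : Filter.Tendsto (fun n => P2 q (q ^ (α+β+1)) n k) Filter.atTop (nhds 1) := by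
    have hf : ∀ j ∈ Finset.range k,
        Filter.Tendsto (fun n : ℕ => 1 - q ^ (α+β+1) * q ^ n * q ^ j)
          Filter.atTop (nhds 1) := by
      intro j _
      have h0 : Filter.Tendsto (fun n : ℕ => q ^ (α+β+1) * q ^ n * q ^ j)
          Filter.atTop (nhds 0) := by
        have := ((tendsto_pow_atTop_nhds_zero_of_lt_one hq0.le hq1).const_mul
          (q ^ (α+β+1))).mul_const (q ^ j)
        simpa using this
      simpa using tendsto_const_nhds.sub h0
    have := tendsto_finset_prod (Finset.range k) hf
    simpa [P2] using this
  have hcast : Filter.Tendsto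
      (fun n => ((P1 q n k * P2 q (q ^ (α+β+1)) n k : ℝ) : ℂ)) Filter.atTop (nhds 1) := by
    have h := (Complex.continuous_ofReal.tendsto (1*1)).comp (hp1.mul hp2)
    simpa [Function.comp_def, Complex.ofReal_mul] using h
  have hmain : Filter.Tendsto
      (fun n => bc α q k * ((P1 q n k * P2 q (q ^ (α+β+1)) n k : ℝ) : ℂ))
      Filter.atTop (nhds (bc α q k)) := by
    simpa using tendsto_const_nhds.mul hcast
  apply hmain.congr'
  filter_upwards [Filter.eventually_ge_atTop k] with n hn
  rw [cp, if_pos hn]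

lemma Mb_nonneg (q α β : ℝ) (hq0 : 0 < q) (hq1 : q < 1) (hα : -1 < α) (k : ℕ) :
    0 ≤ Mb q α β k := by
  have hqa1 : q ^ (α+1) < 1 := Real.rpow_lt_one hq0.le hq1 (by linarith)
  have hs0 : 0 ≤ q ^ (α+β+1) := (Real.rpow_pos_of_pos hq0 _).le
  have hA0 : 0 ≤ (1 + q ^ (α+β+1)) / ((1 - q ^ (α+1)) * (1 - q)) := by
    apply div_nonneg (by linarith); nlinarith
  rw [Mb]
  exact mul_nonneg (mul_nonneg (by norm_num) (pow_nonneg hq0.le _)) (pow_nonneg hA0 _)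

lemma norm_bc_le_Mb (q α β : ℝ) (hq0 : 0 < q) (hq1 : q < 1) (hα : -1 < α) (k : ℕ) :
    ‖bc α q k‖ ≤ Mb q α β k := by
  have hs0 : 0 ≤ q ^ (α+β+1) := (Real.rpow_pos_of_pos hq0 _).le
  have hqa1 : q ^ (α+1) < 1 := Real.rpow_lt_one hq0.le hq1 (by linarith)
  have h1s : (1:ℝ) ≤ (1 + q ^ (α+β+1)) ^ k := one_le_pow₀ (by linarith)
  have he : 0 < (1 - q ^ (α+1)) * (1 - q) := mul_pos (by linarith) (by linarith)
  have hB0 : 0 ≤ q ^ (k * (k - 1) / 2) / ((1 - q ^ (α+1)) * (1 - q)) ^ k := by positivity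
  have hMb : Mb q α β k =
      2 * (q ^ (k * (k - 1) / 2) / ((1 - q ^ (α+1)) * (1 - q)) ^ k) * (1 + q ^ (α+β+1)) ^ k := by
    rw [Mb, div_pow]; ring
  calc ‖bc α q k‖ ≤ q ^ (k * (k - 1) / 2) / ((1 - q ^ (α+1)) * (1 - q)) ^ k :=
        norm_bc_le q α hq0 hq1 hα k
    _ ≤ Mb q α β k := by rw [hMb]; nlinarith

lemma core_est (q α β : ℝ) (hq0 : 0 < q) (hq1 : q < 1) (hα : -1 < α) (hβ : -1 < β)
    (n : ℕ) (R : ℝ) (hR : 0 ≤ R) (x : ℂ) (hx : ‖x‖ ≤ R) :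
    ‖littleQJacobi n α β q ((q:ℂ) ^ n * x) - littleQBessel α q x‖
      ≤ ∑' k, ‖cp α β q n k - bc α q k‖ * R ^ k := by
  have hMb := summable_Mb_mul q α β hq0 hq1 hα R hR
  have hbc_le : ∀ k, ‖bc α q k * x ^ k‖ ≤ Mb q α β k * R ^ k := fun k => by
    rw [norm_mul, norm_pow]
    exact mul_le_mul (norm_bc_le_Mb q α β hq0 hq1 hα k)
      (pow_le_pow_left₀ (norm_nonneg x) hx k) (pow_nonneg (norm_nonneg x) k)
      (Mb_nonneg q α β hq0 hq1 hα k)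
  have hsum_bc : Summable (fun k => bc α q k * x ^ k) :=
    Summable.of_norm_bounded hMb hbc_le
  have hvanish : ∀ k ∉ Finset.range (n+1), cp α β q n k * x ^ k = 0 := by
    intro k hk
    have hkn : ¬ k ≤ n := fun h => hk (Finset.mem_range.mpr (Nat.lt_succ_of_le h))
    rw [cp, if_neg hkn, zero_mul]
  have hsum_cp : Summable (fun k => cp α β q n k * x ^ k) :=
    summable_of_ne_finset_zero hvanish
  have hjac : littleQJacobi n α β q ((q:ℂ) ^ n * x) = ∑' k, cp α β q n k * x ^ k := by
    rw [jacobi_eq q α β hq0 hq1 hα n x]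
    exact (tsum_eq_sum hvanish).symm
  have hS2 : Summable (fun k => ‖cp α β q n k - bc α q k‖ * R ^ k) :=
    Summable.of_nonneg_of_le (fun k => by positivity)
      (fun k => mul_le_mul_of_nonneg_right (norm_sub_le_Mb q α β hq0 hq1 hα hβ n k)
        (pow_nonneg hR k)) hMb
  have hle : ∀ k, ‖(cp α β q n k - bc α q k) * x ^ k‖ ≤ ‖cp α β q n k - bc α q k‖ * R ^ k := by
    intro k
    rw [norm_mul, norm_pow]
    exact mul_le_mul_of_nonneg_left (pow_le_pow_left₀ (norm_nonneg x) hx k) (norm_nonneg _)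
  have h1 : Summable (fun k => ‖(cp α β q n k - bc α q k) * x ^ k‖) :=
    Summable.of_nonneg_of_le (fun k => norm_nonneg _) hle hS2
  rw [hjac, bessel_eq q α hq0 x, ← Summable.tsum_sub hsum_cp hsum_bc]
  have hterm : (fun k => cp α β q n k * x ^ k - bc α q k * x ^ k)
      = fun k => (cp α β q n k - bc α q k) * x ^ k := by
    funext k; ring
  rw [hterm]
  calc ‖∑' k, (cp α β q n k - bc α q k) * x ^ k‖
      ≤ ∑' k, ‖(cp α β q n k - bc α q k) * x ^ k‖ := norm_tsum_le_tsum_norm h1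
    _ ≤ ∑' k, ‖cp α β q n k - bc α q k‖ * R ^ k := Summable.tsum_le_tsum hle h1 hS2

lemma T_tendsto (q α β : ℝ) (hq0 : 0 < q) (hq1 : q < 1) (hα : -1 < α) (hβ : -1 < β)
    (R : ℝ) (hR : 0 ≤ R) :
    Filter.Tendsto (fun n => ∑' k, ‖cp α β q n k - bc α q k‖ * R ^ k)
      Filter.atTop (nhds 0) := by
  have h := tendsto_tsum_of_dominated_convergence (𝓕 := Filter.atTop)
      (f := fun (n : ℕ) (k : ℕ) => ‖cp α β q n k - bc α q k‖ * R ^ k)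
      (g := fun _ => (0:ℝ)) (bound := fun k => Mb q α β k * R ^ k)
      (summable_Mb_mul q α β hq0 hq1 hα R hR) ?_ ?_
  · simpa using h
  · intro k
    have h0 : Filter.Tendsto (fun n => cp α β q n k - bc α q k) Filter.atTop (nhds 0) := by
      simpa using (cp_tendsto q α β hq0 hq1 k).sub (tendsto_const_nhds (x := bc α q k))
    have := h0.norm.mul_const (R ^ k)
    simpa using this
  · apply Filter.Eventually.of_forall
    intro n k
    rw [Real.norm_eq_abs, abs_of_nonneg (by positivity)]
    exact mul_le_mul_of_nonneg_right (norm_sub_le_Mb q α β hq0 hq1 hα hβ n k)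
      (pow_nonneg hR k)

lemma unif_on_ball (q α β : ℝ) (hq0 : 0 < q) (hq1 : q < 1) (hα : -1 < α) (hβ : -1 < β)
    (R : ℝ) (hR : 0 ≤ R) :
    TendstoUniformlyOn (fun (n : ℕ) (x : ℂ) => littleQJacobi n α β q ((q : ℂ) ^ n * x))
      (fun x => littleQBessel α q x) Filter.atTop (Metric.closedBall 0 R) := by
  rw [Metric.tendstoUniformlyOn_iff]
  intro ε hε
  have hT := T_tendsto q α β hq0 hq1 hα hβ R hR
  filter_upwards [hT.eventually (gt_mem_nhds hε)] with n hn x hx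
  rw [dist_eq_norm, norm_sub_rev]
  calc ‖littleQJacobi n α β q ((q:ℂ) ^ n * x) - littleQBessel α q x‖
      ≤ ∑' k, ‖cp α β q n k - bc α q k‖ * R ^ k :=
        core_est q α β hq0 hq1 hα hβ n R hR x (mem_closedBall_zero_iff.mp hx)
    _ < ε := hn

/-- `lim_{n→∞} p_n(q^n x; q^α, q^β; q) = j_α(x;q)`,
uniformly on compact subsets of ℂ. -/
theorem littleQJacobi_tendsto_bessel (q α β : ℝ) (hq0 : 0 < q) (hq1 : q < 1)
    (hα : -1 < α) (hβ : -1 < β) :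
    (∀ x : ℂ, Filter.Tendsto (fun n : ℕ => littleQJacobi n α β q ((q : ℂ) ^ n * x))
        Filter.atTop (nhds (littleQBessel α q x))) ∧
    ∀ K : Set ℂ, IsCompact K →
      TendstoUniformlyOn (fun (n : ℕ) (x : ℂ) => littleQJacobi n α β q ((q : ℂ) ^ n * x))
        (fun x => littleQBessel α q x) Filter.atTop K := by
  constructor
  · intro x
    exact (unif_on_ball q α β hq0 hq1 hα hβ ‖x‖ (norm_nonneg x)).tendsto_at
      (by simpa using mem_closedBall_zero_iff.mpr (le_refl ‖x‖))
  · intro K hK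
    obtain ⟨r, hr⟩ := hK.isBounded.subset_closedBall 0
    refine (unif_on_ball q α β hq0 hq1 hα hβ (max r 0) (le_max_right r 0)).mono ?_
    exact hr.trans (Metric.closedBall_subset_closedBall (le_max_left r 0))
end

section
/- For 0 < q < 1, ν > 0, and integers x, y, z, the kernel Δ_ν(q^x, q^y, q^z; q) appearing in the product formula for normalized little q-Bessel functions satisfies the symmetry q^{(ν+1)x} Δ_ν(q^x, q^y, q^z; q) = q^{(ν+1)z} Δ_ν(q^z, q^y, q^x; q). -/
open scoped BigOperators

/-- Finite q-shifted factorial (real). -/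
noncomputable def rqPoch (a q : ℝ) (k : ℕ) : ℝ := ∏ j ∈ Finset.range k, (1 - a * q ^ j)

/-- q-shifted factorial with integer index:
`(a;q)_n` for `n ≥ 0` and `(a;q)_{-n} = 1/(aq^{-n};q)_n` for `n > 0`. -/
noncomputable def rqPochZ (a q : ℝ) (n : ℤ) : ℝ :=
  if 0 ≤ n then ∏ k ∈ Finset.range n.toNat, (1 - a * q ^ (k : ℤ))
  else 1 / ∏ k ∈ Finset.range (-n).toNat, (1 - a * q ^ ((k : ℤ) + n))

/-- Regularized `(w;q)_∞ ₁φ₁(a; w; q, u)`, defined by the absolutely convergent series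
`Σ_k (a;q)_k (wq^k;q)_∞ / (q;q)_k (-1)^k u^k q^{k(k-1)/2}` (cf. Proposition 2.1). -/
noncomputable def rFphi (a w q u : ℝ) : ℝ :=
  ∑' k : ℕ, rqPoch a q k * rqPochInf (w * q ^ k) q / rqPoch q q k *
    (-1) ^ k * u ^ k * q ^ (k * (k - 1) / 2)

/-- The kernel `Δ_ν(q^x, q^y, q^z; q)` of the product formula for the normalized
little q-Bessel functions. -/
noncomputable def qBesselKernel (ν q : ℝ) (x y z : ℤ) : ℝ :=
  (1 - q ^ ν) / rqPochInf q q *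
    ∑' N : ℤ,
      (rFphi (q ^ (1 + N + y - x - z)) (q ^ (1 + y - x)) q (q ^ (1 + z - x))) ^ 2 *
        q ^ (ν * ((N : ℝ) - (x : ℝ)) + (1 + (y : ℝ) - (x : ℝ)) * ((z : ℝ) - (x : ℝ))) /
        (rqPochZ q q (N - z) * rqPochZ (q ^ N) q⁻¹ x * rqPochInf (q ^ (N + 1)) q *
          rqPochInf (q ^ (1 + N + y - x - z)) q)


open Finset

namespace QB

variable {q : ℝ}

lemma tri_succ (k : ℕ) : (k+1) * k / 2 = k * (k-1) / 2 + k := by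
  have h1 : (k+1) * k / 2 = (k+1).choose 2 := by
    rw [Nat.choose_two_right]; simp
  have h2 : k * (k-1) / 2 = k.choose 2 := by rw [Nat.choose_two_right]
  have h : (k+1).choose 2 = k.choose 1 + k.choose 2 := Nat.choose_succ_succ k 1
  rw [h1, h2, h, Nat.choose_one_right, Nat.add_comm]

lemma rqPoch_q_pos (hq0 : 0 < q) (hq1 : q < 1) (k : ℕ) : 0 < rqPoch q q k := by
  refine Finset.prod_pos fun j _ => ?_
  have h1 : q ^ j ≤ 1 := pow_le_one₀ hq0.le hq1.le
  nlinarith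

lemma rqPoch_q_ne (hq0 : 0 < q) (hq1 : q < 1) (k : ℕ) : rqPoch q q k ≠ 0 :=
  (rqPoch_q_pos hq0 hq1 k).ne'

lemma geom_partial_le (hq0 : 0 < q) (hq1 : q < 1) (n : ℕ) :
    ∑ i ∈ range n, q ^ i ≤ (1-q)⁻¹ := by
  have hs : Summable (fun i : ℕ => q ^ i) := summable_geometric_of_lt_one hq0.le hq1
  have := Summable.sum_le_tsum (range n) (fun i _ => (pow_nonneg hq0.le i)) hs
  rwa [tsum_geometric_of_lt_one hq0.le hq1] at this

lemma abs_rqPoch_le (hq0 : 0 < q) (hq1 : q < 1) (a : ℝ) (k : ℕ) :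
    |rqPoch a q k| ≤ (1 + |a|) ^ k := by
  rw [rqPoch, Finset.abs_prod]
  calc ∏ j ∈ range k, |1 - a * q ^ j| ≤ ∏ j ∈ range k, (1 + |a|) := by
        refine Finset.prod_le_prod (fun j _ => abs_nonneg _) fun j _ => ?_
        have h1 : |1 - a * q ^ j| ≤ 1 + |a| * q ^ j := by
          calc |1 - a * q ^ j| ≤ |1| + |a * q^j| := abs_sub _ _
          _ = 1 + |a| * q ^ j := by
            rw [abs_one, abs_mul, abs_pow, abs_of_pos hq0]
        have h2 : q ^ j ≤ 1 := pow_le_one₀ hq0.le hq1.le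
        nlinarith [abs_nonneg a]
    _ = (1 + |a|) ^ k := by simp

lemma one_sub_ge_exp (hq0 : 0 < q) (hq1 : q < 1) {t : ℝ} (ht0 : 0 ≤ t) (ht : t ≤ q) :
    Real.exp (-(t / (1-q))) ≤ 1 - t := by
  have h1q : (0:ℝ) < 1 - q := by linarith
  have h1t : (0:ℝ) < 1 - t := by linarith
  have h1 : Real.exp (t / (1-t)) ≥ 1 + t / (1-t) := by
    have := Real.add_one_le_exp (t/(1-t)); linarith
  have h2 : (1:ℝ) + t / (1-t) = (1-t)⁻¹ := by field_simp; ring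
  have h3 : (1-t)⁻¹ ≤ Real.exp (t / (1-t)) := by rw [← h2]; linarith
  have h4 : t / (1-t) ≤ t / (1-q) := by
    apply div_le_div_of_nonneg_left ht0 h1q; linarith
  have h5 : Real.exp (-(t/(1-q))) ≤ Real.exp (-(t/(1-t))) := by
    apply Real.exp_le_exp.2; linarith
  have h6 : Real.exp (-(t/(1-t))) = (Real.exp (t/(1-t)))⁻¹ := by
    rw [Real.exp_neg]
  have h7 : (Real.exp (t/(1-t)))⁻¹ ≤ ((1-t)⁻¹)⁻¹ := by
    apply inv_anti₀ (by positivity) h3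
  rw [inv_inv] at h7
  calc Real.exp (-(t/(1-q))) ≤ Real.exp (-(t/(1-t))) := h5
  _ = (Real.exp (t/(1-t)))⁻¹ := h6
  _ ≤ 1 - t := h7

lemma rqPoch_q_ge (hq0 : 0 < q) (hq1 : q < 1) (k : ℕ) :
    Real.exp (-(q / ((1-q)*(1-q)))) ≤ rqPoch q q k := by
  have h1q : (0:ℝ) < 1 - q := by linarith
  have step : ∀ j : ℕ, Real.exp (-(q * q ^ j / (1-q))) ≤ 1 - q * q ^ j := by
    intro j
    refine one_sub_ge_exp hq0 hq1 (by positivity) ?_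
    have : q ^ j ≤ 1 := pow_le_one₀ hq0.le hq1.le
    nlinarith
  calc Real.exp (-(q / ((1-q)*(1-q))))
      ≤ Real.exp (-(∑ j ∈ range k, q * q ^ j / (1-q))) := by
        apply Real.exp_le_exp.2
        have : ∑ j ∈ range k, q * q ^ j / (1-q) = (q / (1-q)) * ∑ j ∈ range k, q ^ j := by
          rw [Finset.mul_sum]; exact Finset.sum_congr rfl fun j _ => by ring
        rw [this]
        have h2 := geom_partial_le hq0 hq1 k
        have h3 : (q/(1-q)) * ∑ j ∈ range k, q^j ≤ (q/(1-q)) * (1-q)⁻¹ := by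
          apply mul_le_mul_of_nonneg_left h2 (by positivity)
        have h4 : (q/(1-q)) * (1-q)⁻¹ = q / ((1-q)*(1-q)) := by field_simp
        linarith [h3.trans_eq h4]
    _ = ∏ j ∈ range k, Real.exp (-(q * q ^ j / (1-q))) := by
        rw [← Real.exp_sum]; congr 1; rw [← Finset.sum_neg_distrib]
    _ ≤ ∏ j ∈ range k, (1 - q * q ^ j) := by
        exact Finset.prod_le_prod (fun j _ => (Real.exp_pos _).le) fun j _ => step j
    _ = rqPoch q q k := rfl


variable {q : ℝ}

lemma abs_log_one_sub_le {t : ℝ} (ht : |t| ≤ 1/2) : |Real.log (1 - t)| ≤ 2 * |t| := by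
  have ht1 : t ≤ 1/2 := (abs_le.1 ht).2
  have ht2 : -(1/2) ≤ t := (abs_le.1 ht).1
  have hpos : (0:ℝ) < 1 - t := by linarith
  have hup : Real.log (1 - t) ≤ -t := by
    have := Real.log_le_sub_one_of_pos hpos; linarith
  have hlow : -(t / (1 - t)) ≤ Real.log (1 - t) := by
    have h1 : Real.log (1-t)⁻¹ ≤ (1-t)⁻¹ - 1 := Real.log_le_sub_one_of_pos (by positivity)
    rw [Real.log_inv] at h1
    have h2 : (1-t)⁻¹ - 1 = t / (1-t) := by field_simp; ring
    linarith [h1.trans_eq h2]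
  have hq : t / (1 - t) ≤ 2 * |t| := by
    rcases le_or_gt 0 t with h | h
    · rw [abs_of_nonneg h]
      rw [div_le_iff₀ hpos]; nlinarith
    · have : t / (1-t) < 0 := div_neg_of_neg_of_pos h hpos
      have := abs_nonneg t; linarith
  rw [abs_le]
  constructor
  · linarith
  · have : -t ≤ |t| := neg_le_abs t
    have h2 : |t| ≤ 2 * |t| := by have := abs_nonneg t; linarith
    linarith

lemma multipliable_aux (hq0 : 0 < q) (hq1 : q < 1) (v : ℝ) :
    Multipliable (fun j : ℕ => 1 - v * q ^ j) := by
  obtain ⟨k, hk⟩ : ∃ k : ℕ, |v| * q ^ k ≤ 1/2 := by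
    obtain ⟨k, hk⟩ := exists_pow_lt_of_lt_one
      (x := (2 * (|v| + 1))⁻¹) (by positivity) hq1
    refine ⟨k, ?_⟩
    have h1 : |v| * q ^ k ≤ |v| * (2 * (|v|+1))⁻¹ :=
      mul_le_mul_of_nonneg_left hk.le (abs_nonneg v)
    have h2 : |v| * (2 * (|v|+1))⁻¹ ≤ 1/2 := by
      rw [div_eq_mul_inv]
      have hpos : (0:ℝ) < 2 * (|v|+1) := by positivity
      rw [mul_inv_le_iff₀ hpos]
      nlinarith [abs_nonneg v]
    linarith
  set v' := v * q ^ k with hv'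
  have hv'le : |v'| ≤ 1/2 := by
    rw [hv', abs_mul, abs_pow, abs_of_pos hq0]; exact hk
  have htail : Multipliable (fun n : ℕ => 1 - v' * q ^ n) := by
    have hfn : ∀ (_ : Unit) (n : ℕ), 0 < 1 - v' * q ^ n := by
      intro _ n
      have h1 : |v' * q ^ n| ≤ 1/2 := by
        rw [abs_mul, abs_pow, abs_of_pos hq0]
        have : q ^ n ≤ 1 := pow_le_one₀ hq0.le hq1.le
        nlinarith [abs_nonneg v']
      have := (abs_le.1 h1).2; linarith
    have hlog : ∀ (_ : Unit), Summable fun n : ℕ => Real.log (1 - v' * q ^ n) := by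
      intro _
      apply Summable.of_norm_bounded (g := fun n => 2 * |v'| * q ^ n)
      · exact (summable_geometric_of_lt_one hq0.le hq1).mul_left _
      · intro n
        rw [Real.norm_eq_abs]
        have h1 : |v' * q ^ n| ≤ 1/2 := by
          rw [abs_mul, abs_pow, abs_of_pos hq0]
          have : q ^ n ≤ 1 := pow_le_one₀ hq0.le hq1.le
          nlinarith [abs_nonneg v']
        have := abs_log_one_sub_le h1
        rw [abs_mul, abs_pow, abs_of_pos hq0] at this
        calc |Real.log (1 - v' * q ^ n)| ≤ 2 * (|v'| * q ^ n) := this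
        _ = 2 * |v'| * q ^ n := by ring
    exact Real.multipliable_of_summable_log (hfn ()) (hlog ())
  apply Multipliable.comp_nat_add (k := k)
  refine htail.congr fun n => ?_
  simp only [hv']
  rw [pow_add]; ring

lemma rqPochInf_peel (hq0 : 0 < q) (hq1 : q < 1) (v : ℝ) :
    rqPochInf v q = (1 - v) * rqPochInf (v * q) q := by
  have hm : Multipliable (fun j : ℕ => 1 - (v*q) * q ^ j) := multipliable_aux hq0 hq1 _
  have e : (fun j : ℕ => 1 - (v*q) * q ^ j) = (fun j : ℕ => 1 - v * q ^ (j+1)) :=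
    funext fun j => by ring
  have h1 : HasProd (fun j : ℕ => 1 - v * q ^ (j+1)) (rqPochInf (v*q) q) := by
    rw [← e]; exact hm.hasProd
  have h2 : HasProd (fun j : ℕ => 1 - v * q ^ j) ((1 - v * q ^ 0) * rqPochInf (v*q) q) :=
    HasProd.zero_mul h1
  have := h2.tprod_eq
  rw [rqPochInf, this, pow_zero, mul_one]

lemma abs_rqPochInf_le (hq0 : 0 < q) (hq1 : q < 1) (v : ℝ) :
    |rqPochInf v q| ≤ Real.exp (|v| * (1-q)⁻¹) := by
  have hm := multipliable_aux hq0 hq1 v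
  have ht := hm.hasProd.tendsto_prod_nat
  have habs : Filter.Tendsto (fun n => |∏ i ∈ range n, (1 - v * q ^ i)|)
      Filter.atTop (nhds |rqPochInf v q|) := ht.abs
  apply le_of_tendsto habs
  filter_upwards with n
  calc |∏ i ∈ range n, (1 - v * q ^ i)| = ∏ i ∈ range n, |1 - v * q ^ i| :=
        Finset.abs_prod _ _
  _ ≤ ∏ i ∈ range n, Real.exp (|v| * q ^ i) := by
      refine Finset.prod_le_prod (fun i _ => abs_nonneg _) fun i _ => ?_
      have h1 : |1 - v * q ^ i| ≤ 1 + |v| * q ^ i := by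
        calc |1 - v * q ^ i| ≤ |1| + |v * q ^ i| := abs_sub _ _
        _ = 1 + |v| * q ^ i := by rw [abs_one, abs_mul, abs_pow, abs_of_pos hq0]
      have h2 := Real.add_one_le_exp (|v| * q ^ i)
      linarith
  _ = Real.exp (∑ i ∈ range n, |v| * q ^ i) := (Real.exp_sum _ _).symm
  _ ≤ Real.exp (|v| * (1-q)⁻¹) := by
      apply Real.exp_le_exp.2
      rw [← Finset.mul_sum]
      apply mul_le_mul_of_nonneg_left _ (abs_nonneg v)
      have hs : Summable (fun i : ℕ => q ^ i) := summable_geometric_of_lt_one hq0.le hq1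
      have := Summable.sum_le_tsum (range n) (fun i _ => (pow_nonneg hq0.le i)) hs
      rwa [tsum_geometric_of_lt_one hq0.le hq1] at this
noncomputable def phiTerm (a w q u : ℝ) (k : ℕ) : ℝ :=
  rqPoch a q k * rqPochInf (w * q ^ k) q / rqPoch q q k *
    (-1) ^ k * u ^ k * q ^ (k * (k - 1) / 2)

lemma rFphi_eq (a w q u : ℝ) : rFphi a w q u = ∑' k, phiTerm a w q u k := rfl

lemma summable_phiTerm (hq0 : 0 < q) (hq1 : q < 1) (a w u : ℝ) :
    Summable (phiTerm a w q u) := by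
  set C : ℝ := Real.exp (|w| * (1-q)⁻¹) * Real.exp (q / ((1-q)*(1-q))) with hC
  have hCpos : 0 < C := by positivity
  set r : ℝ := (1 + |a|) * |u| with hr
  have hrnn : 0 ≤ r := by positivity
  set g : ℕ → ℝ := fun k => C * r ^ k * q ^ (k * (k-1) / 2) with hg
  have hgpos : ∀ k, 0 ≤ g k := fun k => by positivity
  have hsumg : Summable g := by
    apply summable_of_ratio_norm_eventually_le (r := 1/2) (by norm_num)
    have hev : ∀ᶠ k in Filter.atTop, r * q ^ k ≤ 1/2 := by
      have h0 : Filter.Tendsto (fun k : ℕ => r * q ^ k) Filter.atTop (nhds (r * 0)) :=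
        (tendsto_pow_atTop_nhds_zero_of_lt_one hq0.le hq1).const_mul r
      rw [mul_zero] at h0
      exact h0.eventually_le_const (by norm_num)
    filter_upwards [hev] with k hk
    have hgk : g (k+1) = (r * q ^ k) * g k := by
      rw [hg]; simp only [Nat.add_sub_cancel]
      rw [tri_succ, pow_add, pow_succ]
      ring
    rw [Real.norm_eq_abs, Real.norm_eq_abs, abs_of_nonneg (hgpos _), abs_of_nonneg (hgpos _),
      hgk]
    have := hgpos k
    nlinarith
  apply Summable.of_norm_bounded hsumg
  intro k
  rw [Real.norm_eq_abs, phiTerm]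
  have h3 : 0 < rqPoch q q k := rqPoch_q_pos hq0 hq1 k
  rw [abs_mul, abs_mul, abs_mul, abs_div, abs_mul]
  rw [abs_of_pos h3, abs_pow, abs_pow, abs_pow, abs_neg, abs_one, one_pow, mul_one,
    abs_of_pos hq0]
  have b1 : |rqPoch a q k| ≤ (1 + |a|) ^ k := abs_rqPoch_le hq0 hq1 a k
  have b2 : |rqPochInf (w * q ^ k) q| ≤ Real.exp (|w| * (1-q)⁻¹) := by
    have := abs_rqPochInf_le hq0 hq1 (w * q ^ k)
    have hle : |w * q ^ k| ≤ |w| := by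
      rw [abs_mul, abs_pow, abs_of_pos hq0]
      have h4 : q ^ k ≤ 1 := pow_le_one₀ hq0.le hq1.le
      nlinarith [abs_nonneg w]
    refine this.trans (Real.exp_le_exp.2 ?_)
    have hq' : (0:ℝ) < 1 - q := by linarith
    have hinv : (0:ℝ) < (1-q)⁻¹ := by positivity
    nlinarith
  have b3 : (rqPoch q q k)⁻¹ ≤ Real.exp (q / ((1-q)*(1-q))) := by
    have hge := rqPoch_q_ge hq0 hq1 k
    have h5 : (rqPoch q q k)⁻¹ ≤ (Real.exp (-(q / ((1-q)*(1-q)))))⁻¹ :=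
      inv_anti₀ (Real.exp_pos _) hge
    rwa [← Real.exp_neg, neg_neg] at h5
  have hb : |rqPoch a q k| * |rqPochInf (w * q ^ k) q| / rqPoch q q k * |u| ^ k *
      q ^ (k * (k-1)/2) ≤ ((1+|a|)^k * Real.exp (|w| * (1-q)⁻¹) *
      Real.exp (q / ((1-q)*(1-q)))) * |u| ^ k * q ^ (k*(k-1)/2) := by
    have h6 : |rqPoch a q k| * |rqPochInf (w * q ^ k) q| / rqPoch q q k ≤
        (1+|a|)^k * Real.exp (|w| * (1-q)⁻¹) * Real.exp (q / ((1-q)*(1-q))) := by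
      rw [div_eq_mul_inv]
      have e1 : 0 ≤ |rqPochInf (w * q ^ k) q| := abs_nonneg _
      have e2 : 0 ≤ |rqPoch a q k| := abs_nonneg _
      have e3 : 0 ≤ (rqPoch q q k)⁻¹ := by positivity
      have e4 : (0:ℝ) ≤ (1+|a|)^k := by positivity
      have e5 : (0:ℝ) < Real.exp (|w| * (1-q)⁻¹) := Real.exp_pos _
      have s1 : |rqPoch a q k| * |rqPochInf (w * q ^ k) q| ≤
          (1+|a|)^k * Real.exp (|w| * (1-q)⁻¹) := mul_le_mul b1 b2 e1 e4
      exact mul_le_mul s1 b3 e3 (by positivity)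
    have e7 : (0:ℝ) ≤ |u| ^ k * q ^ (k*(k-1)/2) := by positivity
    calc |rqPoch a q k| * |rqPochInf (w * q ^ k) q| / rqPoch q q k * |u| ^ k * q ^ (k * (k-1)/2)
        = (|rqPoch a q k| * |rqPochInf (w * q ^ k) q| / rqPoch q q k) * (|u| ^ k * q ^ (k*(k-1)/2)) := by ring
      _ ≤ ((1+|a|)^k * Real.exp (|w| * (1-q)⁻¹) * Real.exp (q / ((1-q)*(1-q)))) * (|u| ^ k * q ^ (k*(k-1)/2)) :=
          mul_le_mul_of_nonneg_right h6 e7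
      _ = ((1+|a|)^k * Real.exp (|w| * (1-q)⁻¹) * Real.exp (q / ((1-q)*(1-q)))) * |u| ^ k * q ^ (k*(k-1)/2) := by ring
  refine hb.trans ?_
  rw [hg]; simp only
  rw [hC, hr]
  rw [mul_pow]
  ring_nf
  exact le_refl _

lemma rqPoch_succ_first (a : ℝ) (k : ℕ) :
    rqPoch a q (k+1) = (1 - a) * rqPoch (a*q) q k := by
  rw [rqPoch, Finset.prod_range_succ']
  rw [rqPoch]
  simp only [pow_zero, mul_one]
  rw [mul_comm]
  congr 1
  exact Finset.prod_congr rfl fun j _ => by ring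

lemma rqPoch_succ_last (a : ℝ) (k : ℕ) :
    rqPoch a q (k+1) = rqPoch a q k * (1 - a * q ^ k) := Finset.prod_range_succ _ _

lemma poch_swap (a : ℝ) (k : ℕ) :
    (1 - a) * rqPoch (a*q) q k = rqPoch a q k * (1 - a * q ^ k) := by
  rw [← rqPoch_succ_first, rqPoch_succ_last]

lemma rqPochInf_peel_shift (hq0 : 0 < q) (hq1 : q < 1) (b : ℝ) (k : ℕ) :
    rqPochInf (b * q ^ k) q = (1 - b * q ^ k) * rqPochInf ((b*q) * q ^ k) q := by
  rw [rqPochInf_peel hq0 hq1 (b * q ^ k)]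
  congr 2
  ring

lemma one_sub_q_pow_ne (hq0 : 0 < q) (hq1 : q < 1) (k : ℕ) : (1:ℝ) - q * q ^ k ≠ 0 := by
  have h1 : q ^ k ≤ 1 := pow_le_one₀ hq0.le hq1.le
  have : q * q ^ k < 1 := by nlinarith
  linarith

lemma R_id (hq0 : 0 < q) (hq1 : q < 1) (a b u : ℝ) :
    rFphi a b q u = (1-a) * rFphi (a*q) (b*q) q u + (a-b) * rFphi a (b*q) q (u*q) := by
  have hg := summable_phiTerm hq0 hq1 (a*q) (b*q) u
  have hh := summable_phiTerm hq0 hq1 a (b*q) (u*q)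
  rw [rFphi_eq, rFphi_eq, rFphi_eq, ← tsum_mul_left, ← tsum_mul_left,
    ← Summable.tsum_add (hg.mul_left _) (hh.mul_left _)]
  apply tsum_congr
  intro k
  simp only [phiTerm]
  rw [rqPochInf_peel_shift hq0 hq1 b k]
  have hswap := poch_swap (q := q) a k
  have hQ := rqPoch_q_ne hq0 hq1 k
  linear_combination (-(rqPochInf ((b*q) * q ^ k) q / rqPoch q q k * (-1:ℝ)^k * u^k *
    q^(k*(k-1)/2))) * hswap

lemma shift_id (hq0 : 0 < q) (hq1 : q < 1) (a w u : ℝ) :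
    rFphi a w q u = rFphi a w q (u*q) - u * (1-a) * rFphi (a*q) (w*q) q (u*q) := by
  have hf := summable_phiTerm hq0 hq1 a w u
  have hg := summable_phiTerm hq0 hq1 a w (u*q)
  have hh := summable_phiTerm hq0 hq1 (a*q) (w*q) (u*q)
  have hd : Summable (fun k => phiTerm a w q u k - phiTerm a w q (u*q) k) := hf.sub hg
  rw [rFphi_eq, rFphi_eq, rFphi_eq]
  have e1 : ∑' k, phiTerm a w q u k = ∑' k, phiTerm a w q (u*q) k +
      ∑' k, (phiTerm a w q u k - phiTerm a w q (u*q) k) := by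
    rw [← Summable.tsum_add hg hd]
    exact tsum_congr fun k => by ring
  rw [e1]
  have e2 : ∑' k, (phiTerm a w q u k - phiTerm a w q (u*q) k)
      = -(u * (1-a)) * ∑' k, phiTerm (a*q) (w*q) q (u*q) k := by
    rw [Summable.tsum_eq_zero_add hd]
    have hd0 : phiTerm a w q u 0 - phiTerm a w q (u*q) 0 = 0 := by
      simp [phiTerm]
    rw [hd0, zero_add, ← tsum_mul_left]
    apply tsum_congr
    intro k
    simp only [phiTerm]
    rw [rqPoch_succ_first a k, rqPoch_succ_last q k]
    have harg : w * q ^ (k+1) = (w*q) * q ^ k := by ring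
    rw [harg]
    have htri : (k+1) * ((k+1) - 1) / 2 = k * (k-1)/2 + k := by
      simpa using tri_succ k
    rw [htri, pow_add]
    have hQ := rqPoch_q_ne hq0 hq1 k
    have hqt := one_sub_q_pow_ne hq0 hq1 k
    field_simp
    ring
  rw [e2]
  ring

lemma key (hq0 : 0 < q) (hq1 : q < 1) (M : ℕ) : ∀ (m : ℕ) (c : ℤ),
    rFphi (q ^ (c + (M:ℤ))) (q ^ c) q (q ^ ((1:ℤ) - (m:ℤ))) =
      (-1:ℝ)^m * q ^ (c * (m:ℤ) + ((m*(m-1)/2 : ℕ) : ℤ)) *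
      (∏ k ∈ Finset.range m, (1 - q ^ ((1:ℤ) + (M:ℤ) - (m:ℤ) + (k:ℤ)))) *
      rFphi (q ^ (c + (M:ℤ))) (q ^ (c + (m:ℤ))) q (q ^ ((1:ℤ) + (m:ℤ))) := by
  have hq : q ≠ 0 := hq0.ne'
  intro m
  induction m with
  | zero => intro c; norm_num
  | succ m ih =>
    intro c
    have E1 : q ^ (-(m:ℤ)) * q = q ^ ((1:ℤ) - (m:ℤ)) := by
      rw [← zpow_add_one₀ hq]; congr 1; ring
    have E2 : q ^ (c + (M:ℤ)) * q = q ^ ((c+1) + (M:ℤ)) := by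
      rw [← zpow_add_one₀ hq]; congr 1; ring
    have E3 : q ^ c * q = q ^ (c+1) := (zpow_add_one₀ hq c).symm
    have h1 := shift_id hq0 hq1 (q ^ (c + (M:ℤ))) (q ^ c) (q ^ (-(m:ℤ)))
    rw [E1, E2, E3] at h1
    rw [ih c, ih (c+1)] at h1
    -- the R identity
    have E7 : q ^ (c + (m:ℤ)) * q = q ^ ((c+1) + (m:ℤ)) := by
      rw [← zpow_add_one₀ hq]; congr 1; ring
    have E8 : q ^ ((1:ℤ) + (m:ℤ)) * q = q ^ (((1:ℤ) + (m:ℤ)) + 1) := by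
      rw [← zpow_add_one₀ hq]
    have h2 := R_id hq0 hq1 (q ^ (c + (M:ℤ))) (q ^ (c + (m:ℤ))) (q ^ ((1:ℤ) + (m:ℤ)))
    rw [E2, E7, E8] at h2
    -- rewrite goal's (m+1)-exponents to match
    have G1 : ((1:ℤ) - ((m:ℕ)+1 : ℕ)) = -(m:ℤ) := by push_cast; ring
    have G2 : (c + ((m:ℕ)+1 : ℕ)) = (c+1) + (m:ℤ) := by push_cast; ring
    have G3 : ((1:ℤ) + ((m:ℕ)+1 : ℕ)) = ((1:ℤ) + (m:ℤ)) + 1 := by push_cast; ring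
    rw [G1, G2, G3, h1]
    -- peel the product
    have g9 : (∏ k ∈ Finset.range (m+1), (1 - q ^ ((1:ℤ) + (M:ℤ) - ((m:ℕ)+1:ℕ) + (k:ℤ))))
        = (1 - q ^ ((M:ℤ) - (m:ℤ))) * ∏ k ∈ Finset.range m, (1 - q ^ ((1:ℤ) + (M:ℤ) - (m:ℤ) + (k:ℤ))) := by
      rw [Finset.prod_range_succ', mul_comm]
      congr 1
      · congr 1; push_cast; ring
      · refine Finset.prod_congr rfl fun k _ => ?_
        congr 1; push_cast; ring
    rw [g9]
    -- normalize all remaining powers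
    have g1 : q ^ (c * (m:ℤ) + ((m*(m-1)/2 : ℕ) : ℤ)) = (q ^ c) ^ m * q ^ (m*(m-1)/2) := by
      rw [zpow_add₀ hq, zpow_mul, zpow_natCast, zpow_natCast]
    have g2 : q ^ ((c+1) * (m:ℤ) + ((m*(m-1)/2 : ℕ) : ℤ)) = (q ^ (c+1)) ^ m * q ^ (m*(m-1)/2) := by
      rw [zpow_add₀ hq, zpow_mul, zpow_natCast, zpow_natCast]
    have g3 : q ^ (c * ((m:ℕ)+1:ℕ) + (((m+1)*((m+1)-1)/2 : ℕ) : ℤ))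
        = (q ^ c) ^ (m+1) * (q ^ (m*(m-1)/2) * q ^ m) := by
      have h' : ((m+1)*((m+1)-1)/2 : ℕ) = m*(m-1)/2 + m := by
        simpa using tri_succ m
      rw [h', zpow_add₀ hq, zpow_mul]
      rw [zpow_natCast, zpow_natCast, pow_add]
      ring
    have g4 : q ^ (c + (M:ℤ)) = q ^ c * q ^ ((M:ℤ) - (m:ℤ)) * q ^ m := by
      rw [← zpow_natCast q m, ← zpow_add₀ hq, ← zpow_add₀ hq]; congr 1; push_cast; ring
    have g5 : q ^ (c + (m:ℤ)) = q ^ c * q ^ m := by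
      rw [← zpow_natCast q m, ← zpow_add₀ hq]
    have g8 : q ^ (-(m:ℤ)) = (q ^ m)⁻¹ := by
      rw [zpow_neg, zpow_natCast]
    have gE3 : q ^ (c+1) = q ^ c * q := zpow_add_one₀ hq c
    rw [g1, g2, g3, g8, g4, g5, gE3]
    rw [g4, g5] at h2
    rw [h2]
    have htm : (q:ℝ) ^ m ≠ 0 := pow_ne_zero _ hq
    field_simp
    ring

lemma rqPochZ_neg_zero (hq0 : 0 < q) {n : ℤ} (hn : n < 0) : rqPochZ q q n = 0 := by
  have hq : q ≠ 0 := hq0.ne'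
  rw [rqPochZ, if_neg (not_le.2 hn)]
  have hzero : ∏ k ∈ Finset.range (-n).toNat, (1 - q * q ^ ((k:ℤ) + n)) = 0 := by
    apply Finset.prod_eq_zero (i := (-n).toNat - 1) (Finset.mem_range.2 (by omega))
    have he : (((-n).toNat - 1 : ℕ) : ℤ) + n = -1 := by omega
    rw [he]
    have : q * q ^ (-1 : ℤ) = 1 := by
      rw [mul_comm, ← zpow_add_one₀ hq]; norm_num
    rw [this]; ring
  rw [hzero, div_zero]

lemma rqPochZ_nonneg {n : ℤ} (hn : 0 ≤ n) : rqPochZ q q n = rqPoch q q n.toNat := by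
  rw [rqPochZ, if_pos hn, rqPoch]
  exact Finset.prod_congr rfl fun k _ => by rw [zpow_natCast]

lemma rqPochZ_inv_zero_nonneg (hq0 : 0 < q) {N x : ℤ} (h0 : 0 ≤ N) (hx : N < x) :
    rqPochZ (q ^ N) q⁻¹ x = 0 := by
  have hq : q ≠ 0 := hq0.ne'
  rw [rqPochZ, if_pos (by omega : (0:ℤ) ≤ x)]
  apply Finset.prod_eq_zero (i := N.toNat) (Finset.mem_range.2 (by omega))
  have he : ((N.toNat : ℕ) : ℤ) = N := by omega
  rw [he, inv_zpow, ← zpow_neg, ← zpow_add₀ hq]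
  norm_num

lemma rqPochZ_inv_zero_neg (hq0 : 0 < q) {N x : ℤ} (hx : x ≤ N) (hN : N < 0) :
    rqPochZ (q ^ N) q⁻¹ x = 0 := by
  have hq : q ≠ 0 := hq0.ne'
  rw [rqPochZ, if_neg (by omega : ¬ (0:ℤ) ≤ x)]
  have hzero : ∏ k ∈ Finset.range (-x).toNat, (1 - q ^ N * (q⁻¹) ^ ((k:ℤ) + x)) = 0 := by
    apply Finset.prod_eq_zero (i := (N - x).toNat) (Finset.mem_range.2 (by omega))
    have he : (((N - x).toNat : ℕ) : ℤ) + x = N := by omega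
    rw [he, inv_zpow, ← zpow_neg, ← zpow_add₀ hq]
    norm_num
  rw [hzero, div_zero]

lemma rqPochZ_inv_eq (hq0 : 0 < q) (hq1 : q < 1) {N x : ℤ} (h0 : 0 ≤ N) (hx : x ≤ N) :
    rqPochZ (q ^ N) q⁻¹ x = rqPoch q q N.toNat / rqPoch q q (N - x).toNat := by
  have hq : q ≠ 0 := hq0.ne'
  rcases le_or_gt 0 x with hx0 | hx0
  · rw [rqPochZ, if_pos hx0]
    set B := (N - x).toNat with hB
    set s := x.toNat with hs
    have hprod : ∏ k ∈ Finset.range s, (1 - q ^ N * (q⁻¹) ^ (k:ℤ))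
        = ∏ k ∈ Finset.range s, (1 - q * q ^ (B + k)) := by
      rw [← Finset.prod_range_reflect (fun k => 1 - q * q ^ (B + k)) s]
      refine Finset.prod_congr rfl fun k hk => ?_
      have hks : k < s := Finset.mem_range.1 hk
      congr 1
      rw [inv_zpow, ← zpow_neg, ← zpow_add₀ hq]
      have he : N + -(k:ℤ) = ((B + (s - 1 - k) + 1 : ℕ) : ℤ) := by omega
      rw [he, zpow_natCast, pow_succ]
      ring
    have hsplit : rqPoch q q (B + s) = rqPoch q q B * ∏ k ∈ Finset.range s,
        (1 - q * q ^ (B + k)) := by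
      rw [rqPoch, rqPoch, ← Finset.prod_range_add]
    have hn2 : N.toNat = B + s := by omega
    rw [hprod, hn2, hsplit]
    field_simp [rqPoch_q_ne hq0 hq1 B]
  · rw [rqPochZ, if_neg (not_le.2 hx0)]
    set n := N.toNat with hn
    set t := (-x).toNat with ht
    have hPP : (0:ℝ) < ∏ k ∈ Finset.range t, (1 - q * q ^ (n + k)) := by
      refine Finset.prod_pos fun k _ => ?_
      have h1 : q ^ (n+k) ≤ 1 := pow_le_one₀ hq0.le hq1.le
      nlinarith
    have hprod : ∏ k ∈ Finset.range t, (1 - q ^ N * (q⁻¹) ^ ((k:ℤ) + x))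
        = ∏ k ∈ Finset.range t, (1 - q * q ^ (n + k)) := by
      rw [← Finset.prod_range_reflect (fun k => 1 - q * q ^ (n + k)) t]
      refine Finset.prod_congr rfl fun k hk => ?_
      have hks : k < t := Finset.mem_range.1 hk
      congr 1
      rw [inv_zpow, ← zpow_neg, ← zpow_add₀ hq]
      have he : N + -((k:ℤ) + x) = ((n + (t - 1 - k) + 1 : ℕ) : ℤ) := by omega
      rw [he, zpow_natCast, pow_succ]
      ring
    have hsplit : rqPoch q q (n + t) = rqPoch q q n * ∏ k ∈ Finset.range t,
        (1 - q * q ^ (n + k)) := by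
      rw [rqPoch, rqPoch, ← Finset.prod_range_add]
    have hNx : (N - x).toNat = n + t := by omega
    rw [hprod, hNx, hsplit]
    rw [eq_div_iff (mul_ne_zero (rqPoch_q_ne hq0 hq1 n) hPP.ne')]
    field_simp

lemma P_zero (hq0 : 0 < q) {M m : ℕ} (h : M < m) :
    ∏ k ∈ Finset.range m, (1 - q ^ ((1:ℤ) + (M:ℤ) - (m:ℤ) + (k:ℤ))) = 0 := by
  apply Finset.prod_eq_zero (i := m - 1 - M) (Finset.mem_range.2 (by omega))
  have he : (1:ℤ) + (M:ℤ) - (m:ℤ) + ((m - 1 - M : ℕ) : ℤ) = 0 := by omega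
  rw [he, zpow_zero]; ring

lemma P_val (hq0 : 0 < q) {M m A : ℕ} (hA : (M:ℤ) - (m:ℤ) = (A:ℤ)) :
    ∏ k ∈ Finset.range m, (1 - q ^ ((1:ℤ) + (M:ℤ) - (m:ℤ) + (k:ℤ)))
      = ∏ k ∈ Finset.range m, (1 - q * q ^ (A + k)) := by
  refine Finset.prod_congr rfl fun k _ => ?_
  congr 1
  have he : (1:ℤ) + (M:ℤ) - (m:ℤ) + (k:ℤ) = ((A + k + 1 : ℕ) : ℤ) := by omega
  rw [he, zpow_natCast, pow_succ]
  ring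

lemma per_term (hq0 : 0 < q) (hq1 : q < 1) (ν : ℝ) (x y z N : ℤ) (hzx : z ≤ x) :
    q ^ ((ν + 1) * (x : ℝ)) *
      ((rFphi (q ^ (1 + N + y - x - z)) (q ^ (1 + y - x)) q (q ^ (1 + z - x))) ^ 2 *
        q ^ (ν * ((N : ℝ) - (x : ℝ)) + (1 + (y : ℝ) - (x : ℝ)) * ((z : ℝ) - (x : ℝ))) /
        (rqPochZ q q (N - z) * rqPochZ (q ^ N) q⁻¹ x * rqPochInf (q ^ (N + 1)) q *
          rqPochInf (q ^ (1 + N + y - x - z)) q))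
    = q ^ ((ν + 1) * (z : ℝ)) *
      ((rFphi (q ^ (1 + N + y - z - x)) (q ^ (1 + y - z)) q (q ^ (1 + x - z))) ^ 2 *
        q ^ (ν * ((N : ℝ) - (z : ℝ)) + (1 + (y : ℝ) - (z : ℝ)) * ((x : ℝ) - (z : ℝ))) /
        (rqPochZ q q (N - x) * rqPochZ (q ^ N) q⁻¹ z * rqPochInf (q ^ (N + 1)) q *
          rqPochInf (q ^ (1 + N + y - z - x)) q)) := by
  have hq : q ≠ 0 := hq0.ne'
  rcases lt_or_ge N z with hNz | hNz
  · rw [rqPochZ_neg_zero hq0 (by omega : N - z < 0),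
      rqPochZ_neg_zero hq0 (by omega : N - x < 0)]
    simp
  · set M := (N - z).toNat with hM
    set m := (x - z).toNat with hm
    have hMc : (M:ℤ) = N - z := Int.toNat_of_nonneg (by omega)
    have hmc : (m:ℤ) = x - z := Int.toNat_of_nonneg (by omega)
    have ex1 : (1:ℤ) + N + y - x - z = (1 + y - x) + (M:ℤ) := by rw [hMc]; ring
    have ex2 : (1:ℤ) + z - x = 1 - (m:ℤ) := by rw [hmc]; ring
    have ex3 : (1:ℤ) + N + y - z - x = (1 + y - x) + (M:ℤ) := by rw [hMc]; ring
    have ex4 : (1:ℤ) + y - z = (1 + y - x) + (m:ℤ) := by rw [hmc]; ring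
    have ex5 : (1:ℤ) + x - z = 1 + (m:ℤ) := by rw [hmc]; ring
    rw [ex1, ex2, ex3, ex4, ex5, key hq0 hq1 M m (1 + y - x)]
    rcases lt_or_ge N x with hNx | hNx
    · rw [P_zero hq0 (by omega : M < m),
        rqPochZ_neg_zero hq0 (by omega : N - x < 0)]
      simp
    · rcases lt_or_ge N 0 with hN0 | hN0
      · rw [rqPochZ_inv_zero_neg hq0 hNx hN0,
          rqPochZ_inv_zero_neg hq0 (by omega : z ≤ N) hN0]
        simp
      · set A := (N - x).toNat with hA
        have hAc : (A:ℤ) = N - x := Int.toNat_of_nonneg (by omega)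
        have hMm : (M:ℤ) - (m:ℤ) = (A:ℤ) := by omega
        rw [P_val hq0 hMm,
          rqPochZ_nonneg (by omega : (0:ℤ) ≤ N - z),
          rqPochZ_nonneg (by omega : (0:ℤ) ≤ N - x),
          rqPochZ_inv_eq hq0 hq1 hN0 hNx,
          rqPochZ_inv_eq hq0 hq1 hN0 (by omega : z ≤ N)]
        rw [← hM, ← hA]
        have hAm : M = A + m := by omega
        have hsplitP : rqPoch q q M = rqPoch q q A *
            ∏ k ∈ Finset.range m, (1 - q * q ^ (A + k)) := by
          rw [hAm, rqPoch, rqPoch, ← Finset.prod_range_add]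
        set PP := ∏ k ∈ Finset.range m, (1 - q * q ^ (A + k)) with hPPdef
        have hPPpos : 0 < PP := by
          refine Finset.prod_pos fun k _ => ?_
          have h1 : q ^ (A+k) ≤ 1 := pow_le_one₀ hq0.le hq1.le
          nlinarith
        set E : ℤ := (1 + y - x) * (m:ℤ) + ((m*(m-1)/2 : ℕ) : ℤ) with hE
        have hs : ((-1:ℝ)^m)^2 = 1 := by
          rw [← pow_mul, mul_comm, pow_mul]; norm_num
        have expand : ∀ F : ℝ, ((-1:ℝ)^m * q ^ E * PP * F)^2 = (q^E)^2 * (PP^2 * F^2) := by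
          intro F
          rw [mul_pow, mul_pow, mul_pow, hs, one_mul]
          ring
        rw [expand]
        have hmr : (m:ℝ) = (x:ℝ) - (z:ℝ) := by exact_mod_cast hmc
        have hev : Even (m * (m-1)) := by
          rcases Nat.even_or_odd m with h|h
          · exact h.mul_right _
          · exact ((Nat.Odd.sub_odd h odd_one)).mul_left _
        have h2t : ((m*(m-1)/2 : ℕ) : ℝ) * 2 = ((x:ℝ)-(z:ℝ)) * (((x:ℝ)-(z:ℝ))-1) := by
          have h1 : m*(m-1)/2*2 = m*(m-1) := Nat.div_mul_cancel hev.two_dvd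
          calc ((m*(m-1)/2 : ℕ):ℝ)*2 = ((m*(m-1)/2*2 : ℕ) : ℝ) := by push_cast; ring
            _ = ((m*(m-1) : ℕ):ℝ) := by rw [h1]
            _ = (m:ℝ)*((m:ℝ)-1) := by
                rcases Nat.eq_zero_or_pos m with h0|h0
                · simp [h0]
                · push_cast [Nat.cast_sub h0]; ring
            _ = ((x:ℝ)-(z:ℝ))*(((x:ℝ)-(z:ℝ))-1) := by rw [hmr]
        have hpow : q ^ ((ν + 1) * (x : ℝ)) * (q^E)^2 *
            q ^ (ν * ((N : ℝ) - (x : ℝ)) + (1 + (y : ℝ) - (x : ℝ)) * ((z : ℝ) - (x : ℝ)))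
            = q ^ ((ν + 1) * (z : ℝ)) *
            q ^ (ν * ((N : ℝ) - (z : ℝ)) + (1 + (y : ℝ) - (z : ℝ)) * ((x : ℝ) - (z : ℝ))) := by
          have hsq : ((q:ℝ)^E)^2 = q ^ (((E + E : ℤ)):ℝ) := by
            rw [sq, ← zpow_add₀ hq, ← Real.rpow_intCast q (E+E)]
          rw [hsq, ← Real.rpow_add hq0, ← Real.rpow_add hq0, ← Real.rpow_add hq0]
          congr 1
          rw [hE]
          push_cast
          have hdiv : ((m:ℤ) * (((m-1 : ℕ)):ℤ) / 2) = ((m*(m-1)/2 : ℕ) : ℤ) := by omega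
          rw [hdiv, Int.cast_natCast]
          linear_combination (2*(1+(y:ℝ)-(x:ℝ)))*hmr + h2t
        rw [hsplitP]
        rcases eq_or_ne (rqPochInf (q ^ (N + 1)) q) 0 with hD3 | hD3
        · rw [hD3]; simp
        rcases eq_or_ne (rqPochInf (q ^ ((1 + y - x) + (M:ℤ))) q) 0 with hD4 | hD4
        · rw [hD4]; simp
        have ha := rqPoch_q_ne hq0 hq1 A
        have hn0 := rqPoch_q_ne hq0 hq1 N.toNat
        set n0 := rqPoch q q N.toNat with hn0def
        set aa := rqPoch q q A with haadef
        set D3 := rqPochInf (q ^ (N + 1)) q with hD3def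
        set D4 := rqPochInf (q ^ ((1 + y - x) + (M:ℤ))) q with hD4def
        have dL : aa * PP * (n0 / aa) * D3 * D4 = PP * (n0 * D3 * D4) := by
          field_simp
        have dR : aa * (n0 / (aa * PP)) * D3 * D4 = (n0 * D3 * D4) / PP := by
          field_simp
        rw [dL, dR, div_div_eq_mul_div]
        set F := rFphi (q ^ ((1 + y - x) + (M:ℤ))) (q ^ ((1 + y - x) + (m:ℤ))) q
          (q ^ (1 + (m:ℤ))) with hF
        have hfrac : (q^E)^2 * (PP^2 * F^2) *
            q ^ (ν * ((N : ℝ) - (x : ℝ)) + (1 + (y : ℝ) - (x : ℝ)) * ((z : ℝ) - (x : ℝ))) /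
            (PP * (n0 * D3 * D4))
            = (q^E)^2 * F^2 *
            q ^ (ν * ((N : ℝ) - (x : ℝ)) + (1 + (y : ℝ) - (x : ℝ)) * ((z : ℝ) - (x : ℝ))) *
            PP / (n0 * D3 * D4) := by
          have hne1 : n0 * D3 * D4 ≠ 0 := mul_ne_zero (mul_ne_zero hn0 hD3) hD4
          have hne2 : PP * (n0 * D3 * D4) ≠ 0 := mul_ne_zero hPPpos.ne' hne1
          rw [div_eq_div_iff hne2 hne1]
          ring
        rw [hfrac]
        linear_combination (F^2 * PP / (n0 * D3 * D4)) * hpow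

end QB

lemma QB.main_aux (q ν : ℝ) (hq0 : 0 < q) (hq1 : q < 1) (x y z : ℤ) (hzx : z ≤ x) :
    q ^ ((ν + 1) * (x : ℝ)) * qBesselKernel ν q x y z =
      q ^ ((ν + 1) * (z : ℝ)) * qBesselKernel ν q z y x := by
  rw [qBesselKernel, qBesselKernel, mul_left_comm (q ^ ((ν + 1) * (x : ℝ))),
    mul_left_comm (q ^ ((ν + 1) * (z : ℝ)))]
  congr 1
  rw [← tsum_mul_left, ← tsum_mul_left]
  exact tsum_congr fun N => QB.per_term hq0 hq1 ν x y z N hzx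

/-- `q^{(ν+1)x} Δ_ν(q^x,q^y,q^z;q) = q^{(ν+1)z} Δ_ν(q^z,q^y,q^x;q)`. -/
theorem qBesselKernel_symm_xz (q ν : ℝ) (hq0 : 0 < q) (hq1 : q < 1) (hν : 0 < ν)
    (x y z : ℤ) :
    q ^ ((ν + 1) * (x : ℝ)) * qBesselKernel ν q x y z =
      q ^ ((ν + 1) * (z : ℝ)) * qBesselKernel ν q z y x := by
  rcases le_total z x with h | h
  · exact QB.main_aux q ν hq0 hq1 x y z h
  · exact (QB.main_aux q ν hq0 hq1 z y x h).symm
end
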